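/- arXiv:2201.03733 — 4 statements merged into one kernel-verified Lean document; each statement's English description precedes it below -/
import Mathlib

section
/- Let d ≥ 0 and α ≥ 0 be real numbers, let s = a + ib ∈ ℂ with a > 0, and set S = 1 + d/(s+α) (the PML metric with γ = 1). Then Re( conj(sS) / S ) ≥ a; that is, Re(conj(sS)/S) = a + ε(s,d) for a nonnegative quantity ε(s,d) ≥ 0 that vanishes when d = 0. -/
/-- For the PML metric `S = 1 + d/(s+α)` (γ = 1) with `s = a + ib`, `a > 0`:
`Re(conj(sS)/S) ≥ a`, indeed `Re(conj(sS)/S) = a + ε(s,d)` with `ε(s,d) ≥ 0`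
vanishing when `d = 0`. -/
theorem pml_conj_sS_div_S_re (d α a b : ℝ) (hd : 0 ≤ d) (hα : 0 ≤ α) (ha : 0 < a)
    (s : ℂ) (hs : s = (a : ℂ) + (b : ℂ) * Complex.I)
    (S : ℂ) (hS : S = 1 + (d : ℂ) / (s + (α : ℂ))) :
    a ≤ ((starRingEnd ℂ) (s * S) / S).re ∧
      ∃ ε : ℝ, 0 ≤ ε ∧ ((starRingEnd ℂ) (s * S) / S).re = a + ε ∧ (d = 0 → ε = 0) := by
  have hp : 0 < a + α := by linarith
  have hD1 : (0:ℝ) < (a+α)^2 + b^2 := by positivity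
  have hD2 : (0:ℝ) < (a+α+d)^2 + b^2 := by positivity
  have hw : s + (α:ℂ) ≠ 0 := by
    rw [hs]; intro h
    have := congrArg Complex.re h
    simp at this; linarith
  have hv : s + (α:ℂ) + (d:ℂ) ≠ 0 := by
    rw [hs]; intro h
    have := congrArg Complex.re h
    simp at this; linarith
  have hwc' : (starRingEnd ℂ) s + (α:ℂ) ≠ 0 := by
    simpa using (map_ne_zero (starRingEnd ℂ)).mpr hw
  have hvc' : (starRingEnd ℂ) s + (α:ℂ) + (d:ℂ) ≠ 0 := by
    simpa using (map_ne_zero (starRingEnd ℂ)).mpr hv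
  have hS' : S = (s + α + d) / (s + α) := by rw [hS]; field_simp
  have hS0 : S ≠ 0 := by rw [hS']; exact div_ne_zero hv hw
  have hDc : ((((a+α)^2+b^2) * ((a+α+d)^2+b^2) : ℝ) : ℂ) ≠ 0 := by
    simp only [ne_eq, Complex.ofReal_eq_zero]
    positivity
  have hnw : ((s+α) * (starRingEnd ℂ) (s+α)) = ((((a+α)^2+b^2 : ℝ)) : ℂ) := by
    rw [Complex.mul_conj]
    norm_cast
    rw [hs]; simp [Complex.normSq_apply]; ring
  have hnv : ((s+α+d) * (starRingEnd ℂ) (s+α+d)) = ((((a+α+d)^2+b^2 : ℝ)) : ℂ) := by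
    rw [Complex.mul_conj]
    norm_cast
    rw [hs]; simp [Complex.normSq_apply]; ring
  have key : (starRingEnd ℂ) (s * S) / S
      = (starRingEnd ℂ) s * ((starRingEnd ℂ) (s+α+d))^2 * (s+α)^2
        / ((((a+α)^2+b^2) * ((a+α+d)^2+b^2) : ℝ) : ℂ) := by
    rw [div_eq_div_iff hS0 hDc, Complex.ofReal_mul, ← hnw, ← hnv, hS', map_mul, map_div₀]
    simp only [map_add, Complex.conj_ofReal]
    field_simp
  have hre : ((starRingEnd ℂ) s * ((starRingEnd ℂ) (s+α+d))^2 * (s+α)^2).re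
      = a * (((a+α)^2+b^2) * ((a+α+d)^2+b^2)) + 2*d*b^2*((a+α)^2+b^2+d*α) := by
    rw [hs]
    simp [Complex.mul_re, Complex.mul_im, pow_two]
    ring
  rw [key, Complex.div_ofReal_re, hre]
  set Dr := ((a+α)^2+b^2) * ((a+α+d)^2+b^2) with hDr
  have hDrpos : 0 < Dr := by positivity
  have heq : (a * Dr + 2*d*b^2*((a+α)^2+b^2+d*α)) / Dr
      = a + 2*d*b^2*((a+α)^2+b^2+d*α) / Dr := by
    field_simp
  have hεnn : 0 ≤ 2*d*b^2*((a+α)^2+b^2+d*α) / Dr := by positivity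
  refine ⟨by rw [heq]; linarith, 2*d*b^2*((a+α)^2+b^2+d*α) / Dr, hεnn, heq, ?_⟩
  intro h; simp [h]
end

section
/- (1D PML strip energy estimate in Laplace space.) Let P be a real symmetric positive definite m×m matrix, A a real symmetric m×m matrix, let d ≥ 0, α ≥ 0, γ > 0 be real, let s = a + ib ∈ ℂ with a > 0, and S = γ(1 + d/(s+α)). Let Ũ : [−1,1] → ℂ^m be continuously differentiable and F̃ : [−1,1] → ℂ^m continuous, satisfying the PML strip equation (sS)·Pˉ¹·Ũ(x) = A·Ũ′(x) + Pˉ¹·F̃(x) for all x ∈ [−1,1]. Define ‖G‖_P² = ∫_{−1}^{1} ½ G(x)† Pˉ¹ G(x) dx and BT = ¼( Ũ(1)†AŨ(1) − Ũ(−1)†AŨ(−1) ). Then Re(sS) ≥ aγ > 0 and Re(sS)·‖Ũ‖_P² ≤ ‖Ũ‖_P·‖F̃‖_P + BT. In particular, if BT ≤ 0 then ‖Ũ‖_P ≤ (1/(aγ))·‖F̃‖_P. -/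
open Matrix

set_option maxHeartbeats 1000000

lemma pml_conj_quad {m : ℕ} (M : Matrix (Fin m) (Fin m) ℝ) (hM : M.IsSymm) (u v : Fin m → ℂ) :
    (starRingEnd ℂ) (star u ⬝ᵥ (M.map Complex.ofReal).mulVec v)
      = star v ⬝ᵥ (M.map Complex.ofReal).mulVec u := by
  simp only [dotProduct, Matrix.mulVec, Matrix.map_apply, Pi.star_apply, map_sum,
    Finset.mul_sum]
  rw [Finset.sum_comm]
  refine Finset.sum_congr rfl fun j _ => Finset.sum_congr rfl fun i _ => ?_
  rw [hM.apply j i]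
  simp only [starRingEnd_apply, star_mul', star_star]
  rw [show star ((M j i : ℂ)) = ((M j i : ℂ)) by exact Complex.conj_ofReal _]
  ring

lemma pml_re_nonneg {m : ℕ} (Q : Matrix (Fin m) (Fin m) ℝ) (hQ : Q.PosSemidef) (u : Fin m → ℂ) :
    0 ≤ (star u ⬝ᵥ (Q.map Complex.ofReal).mulVec u).re := by
  have h1 := hQ.dotProduct_mulVec_nonneg (fun i => (u i).re)
  have h2 := hQ.dotProduct_mulVec_nonneg (fun i => (u i).im)
  simp only [dotProduct, Matrix.mulVec, Pi.star_apply, star_trivial] at h1 h2 ⊢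
  have : (∑ i, star (u i) * ∑ j, (Q.map Complex.ofReal) i j * u j).re
      = (∑ i, (u i).re * ∑ j, Q i j * (u j).re) + ∑ i, (u i).im * ∑ j, Q i j * (u j).im := by
    rw [Complex.re_sum, ← Finset.sum_add_distrib]
    refine Finset.sum_congr rfl fun i _ => ?_
    simp only [Complex.mul_re, Complex.star_def, Complex.conj_re, Complex.conj_im, Complex.re_sum,
      Complex.im_sum, Matrix.map_apply, Complex.ofReal_re, Complex.ofReal_im, zero_mul, sub_zero,
      Complex.mul_im, Finset.mul_sum]
    rw [← Finset.sum_add_distrib]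
    exact Finset.sum_congr rfl fun j _ => by ring
  rw [this]; linarith

lemma pml_hasDeriv_quad {m : ℕ} (M : Matrix (Fin m) (Fin m) ℂ) {u : ℝ → Fin m → ℂ}
    {u' : Fin m → ℂ} {s : Set ℝ} {x : ℝ} (h : HasDerivWithinAt u u' s x) :
    HasDerivWithinAt (fun t => star (u t) ⬝ᵥ M.mulVec (u t))
      (star u' ⬝ᵥ M.mulVec (u x) + star (u x) ⬝ᵥ M.mulVec u') s x := by
  have hc : ∀ i, HasDerivWithinAt (fun t => u t i) (u' i) s x := hasDerivWithinAt_pi.mp h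
  simp only [dotProduct, Matrix.mulVec, Pi.star_apply]
  rw [← Finset.sum_add_distrib]
  refine HasDerivWithinAt.fun_sum fun i _ => ?_
  exact (hc i).star.mul (HasDerivWithinAt.fun_sum fun j _ => (hc j).const_mul (M i j))

lemma pml_contOn_quad {m : ℕ} (M : Matrix (Fin m) (Fin m) ℂ) {G H : ℝ → Fin m → ℂ} {s : Set ℝ}
    (hG : ContinuousOn G s) (hH : ContinuousOn H s) :
    ContinuousOn (fun x => (star (G x) ⬝ᵥ M.mulVec (H x)).re) s := by
  have hb : Continuous (fun p : (Fin m → ℂ) × (Fin m → ℂ) => (star p.1 ⬝ᵥ M.mulVec p.2).re) :=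
    Complex.continuous_re.comp ((continuous_star.comp continuous_fst).dotProduct
      (Continuous.matrix_mulVec continuous_const continuous_snd))
  exact hb.comp_continuousOn (hG.prodMk hH)

lemma pml_re_sS {d α γ a b : ℝ} (hd : 0 ≤ d) (hα : 0 ≤ α) (hγ : 0 < γ) (ha : 0 < a)
    {s S : ℂ} (hs : s = (a : ℂ) + (b : ℂ) * Complex.I)
    (hS : S = (γ : ℂ) * (1 + (d : ℂ) / (s + (α : ℂ)))) :
    a * γ ≤ (s * S).re := by
  have hzre : (s + (α : ℂ)).re = a + α := by simp [hs]
  have hzim : (s + (α : ℂ)).im = b := by simp [hs]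
  have hz : (s + (α : ℂ)) ≠ 0 := by
    intro h
    have := congrArg Complex.re h
    rw [hzre] at this
    simp at this
    linarith
  have h1 : s * S = (γ : ℂ) * s + (γ : ℂ) * (d : ℂ) * (s / (s + (α : ℂ))) := by
    rw [hS]; field_simp
  have h2 : (s / (s + (α : ℂ))).re = (a * (a + α) + b * b) / Complex.normSq (s + (α : ℂ)) := by
    rw [Complex.div_re, hzre, hzim]
    rw [show s.re = a by simp [hs], show s.im = b by simp [hs]]
    ring
  have h3 : (s * S).re
      = γ * a + γ * d * ((a * (a + α) + b * b) / Complex.normSq (s + (α : ℂ))) := by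
    rw [h1, Complex.add_re, ← Complex.ofReal_mul, Complex.re_ofReal_mul, Complex.re_ofReal_mul,
      h2, show s.re = a by simp [hs]]
  rw [h3]
  have hnum : 0 ≤ a * (a + α) + b * b := by nlinarith
  have hden : 0 ≤ Complex.normSq (s + (α : ℂ)) := Complex.normSq_nonneg _
  have : 0 ≤ γ * d * ((a * (a + α) + b * b) / Complex.normSq (s + (α : ℂ))) := by positivity
  linarith

/-- 1D PML strip energy estimate in Laplace space: if `(sS)P⁻¹Ũ = AŨ′ + P⁻¹F̃` on
`[−1,1]` with `S = γ(1 + d/(s+α))`, `s = a+ib`, `a > 0`, then `Re(sS) ≥ aγ > 0` and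
`Re(sS)‖Ũ‖_P² ≤ ‖Ũ‖_P‖F̃‖_P + BT`; if moreover `BT ≤ 0` then
`‖Ũ‖_P ≤ (1/(aγ))‖F̃‖_P`. -/
theorem pml_strip_energy_estimate (m : ℕ) (P A : Matrix (Fin m) (Fin m) ℝ)
    (hP : P.PosDef) (hPs : P.IsSymm) (hA : A.IsSymm)
    (d α γ a b : ℝ) (hd : 0 ≤ d) (hα : 0 ≤ α) (hγ : 0 < γ) (ha : 0 < a)
    (s S : ℂ) (hs : s = (a : ℂ) + (b : ℂ) * Complex.I)
    (hS : S = (γ : ℂ) * (1 + (d : ℂ) / (s + (α : ℂ))))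
    (U U' F : ℝ → Fin m → ℂ)
    (hU : ∀ x ∈ Set.Icc (-1 : ℝ) 1, HasDerivWithinAt U (U' x) (Set.Icc (-1 : ℝ) 1) x)
    (hU' : ContinuousOn U' (Set.Icc (-1 : ℝ) 1))
    (hF : ContinuousOn F (Set.Icc (-1 : ℝ) 1))
    (heq : ∀ x ∈ Set.Icc (-1 : ℝ) 1,
      (s * S) • ((P⁻¹.map Complex.ofReal).mulVec (U x)) =
        (A.map Complex.ofReal).mulVec (U' x) + (P⁻¹.map Complex.ofReal).mulVec (F x))
    (normP : (ℝ → Fin m → ℂ) → ℝ)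
    (hnorm : ∀ G : ℝ → Fin m → ℂ, normP G = Real.sqrt (∫ x in (-1 : ℝ)..1,
      (1 / 2) * ((star (G x)) ⬝ᵥ ((P⁻¹.map Complex.ofReal).mulVec (G x))).re))
    (BT : ℝ)
    (hBT : BT = (1 / 4) * (((star (U 1)) ⬝ᵥ ((A.map Complex.ofReal).mulVec (U 1))).re -
      ((star (U (-1))) ⬝ᵥ ((A.map Complex.ofReal).mulVec (U (-1)))).re)) :
    a * γ ≤ (s * S).re ∧ 0 < a * γ ∧
      (s * S).re * (normP U) ^ 2 ≤ normP U * normP F + BT ∧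
      (BT ≤ 0 → normP U ≤ (1 / (a * γ)) * normP F) := by
  have hre_sS : a * γ ≤ (s * S).re := pml_re_sS hd hα hγ ha hs hS
  have haγ : 0 < a * γ := mul_pos ha hγ
  -- abbreviations
  set I : Set ℝ := Set.Icc (-1 : ℝ) 1 with hI
  have huIcc : Set.uIcc (-1 : ℝ) 1 = I := Set.uIcc_of_le (by norm_num)
  have hPinvSymm : (P⁻¹).IsSymm := by
    have hPs' : Pᵀ = P := hPs
    show (P⁻¹)ᵀ = P⁻¹
    rw [Matrix.transpose_nonsing_inv, hPs']
  have hPinvPSD : (P⁻¹).PosSemidef := hP.inv.posSemidef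
  set eU : ℝ → ℝ := fun x => (star (U x) ⬝ᵥ (P⁻¹.map Complex.ofReal).mulVec (U x)).re with heU
  set eF : ℝ → ℝ := fun x => (star (F x) ⬝ᵥ (P⁻¹.map Complex.ofReal).mulVec (F x)).re with heF
  set eUF : ℝ → ℝ := fun x => (star (U x) ⬝ᵥ (P⁻¹.map Complex.ofReal).mulVec (F x)).re with heUF
  set g : ℝ → ℝ := fun x => (star (U x) ⬝ᵥ (A.map Complex.ofReal).mulVec (U x)).re with hgdef
  set r : ℝ → ℝ := fun x => (star (U x) ⬝ᵥ (A.map Complex.ofReal).mulVec (U' x)).re with hrdef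
  have hUc : ContinuousOn U I := fun x hx => (hU x hx).continuousWithinAt
  have h_eU : ContinuousOn eU I := pml_contOn_quad _ hUc hUc
  have h_eF : ContinuousOn eF I := pml_contOn_quad _ hF hF
  have h_eUF : ContinuousOn eUF I := pml_contOn_quad _ hUc hF
  have h_g : ContinuousOn g I := pml_contOn_quad _ hUc hUc
  have h_r : ContinuousOn r I := pml_contOn_quad _ hUc hU'
  have int_eU : IntervalIntegrable eU MeasureTheory.volume (-1) 1 :=
    (huIcc ▸ h_eU).intervalIntegrable
  have int_eF : IntervalIntegrable eF MeasureTheory.volume (-1) 1 :=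
    (huIcc ▸ h_eF).intervalIntegrable
  have int_eUF : IntervalIntegrable eUF MeasureTheory.volume (-1) 1 :=
    (huIcc ▸ h_eUF).intervalIntegrable
  have int_r : IntervalIntegrable r MeasureTheory.volume (-1) 1 :=
    (huIcc ▸ h_r).intervalIntegrable
  set IU : ℝ := ∫ x in (-1 : ℝ)..1, eU x with hIU
  set IF : ℝ := ∫ x in (-1 : ℝ)..1, eF x with hIF
  set IUF : ℝ := ∫ x in (-1 : ℝ)..1, eUF x with hIUF
  have hIU0 : 0 ≤ IU :=
    intervalIntegral.integral_nonneg (by norm_num) fun x _ => pml_re_nonneg _ hPinvPSD _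
  have hIF0 : 0 ≤ IF :=
    intervalIntegral.integral_nonneg (by norm_num) fun x _ => pml_re_nonneg _ hPinvPSD _
  -- imaginary parts vanish for the P⁻¹ quadratic form
  have him : ∀ u : Fin m → ℂ, (star u ⬝ᵥ (P⁻¹.map Complex.ofReal).mulVec u).im = 0 := fun u =>
    Complex.conj_eq_iff_im.mp (pml_conj_quad P⁻¹ hPinvSymm u u)
  -- pointwise energy identity
  have hpt : ∀ x ∈ I, (s * S).re * eU x = r x + eUF x := by
    intro x hx
    have h := congrArg (fun v => (star (U x) ⬝ᵥ v).re) (heq x hx)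
    simp only [dotProduct_smul, smul_eq_mul, dotProduct_add, Complex.add_re,
      Complex.mul_re, him (U x), mul_zero, sub_zero] at h
    exact h
  -- derivative of g
  have hg : ∀ x ∈ I, HasDerivWithinAt g (2 * r x) I x := by
    intro x hx
    have hd1 := pml_hasDeriv_quad (A.map Complex.ofReal) (hU x hx)
    have hre : HasDerivWithinAt g
        ((star (U' x) ⬝ᵥ (A.map Complex.ofReal).mulVec (U x)
          + star (U x) ⬝ᵥ (A.map Complex.ofReal).mulVec (U' x)).re) I x :=
      (Complex.reCLM.hasFDerivAt).comp_hasDerivWithinAt x hd1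
    have hval : (star (U' x) ⬝ᵥ (A.map Complex.ofReal).mulVec (U x)
        + star (U x) ⬝ᵥ (A.map Complex.ofReal).mulVec (U' x)).re = 2 * r x := by
      rw [Complex.add_re, ← pml_conj_quad A hA (U x) (U' x), Complex.conj_re]
      simp only [hrdef]; ring
    exact hval ▸ hre
  -- FTC
  have hFTC : ∫ x in (-1 : ℝ)..1, 2 * r x = g 1 - g (-1) := by
    apply intervalIntegral.integral_eq_sub_of_hasDeriv_right_of_le (by norm_num)
      (hI ▸ h_g)
    · intro x hx
      have hnb : I ∈ nhds x := by
        rw [hI]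
        exact Icc_mem_nhds hx.1 hx.2
      exact ((hg x (Set.mem_Icc.mpr ⟨hx.1.le, hx.2.le⟩)).hasDerivAt hnb).hasDerivWithinAt
    · exact (huIcc ▸ (h_r.const_smul (2:ℝ))).intervalIntegrable
  have hint_r : ∫ x in (-1 : ℝ)..1, r x = (g 1 - g (-1)) / 2 := by
    have h2 : ∫ x in (-1 : ℝ)..1, 2 * r x = 2 * ∫ x in (-1 : ℝ)..1, r x :=
      intervalIntegral.integral_const_mul 2 r
    rw [h2] at hFTC
    linarith
  -- integrated identity
  have hIntEq : (s * S).re * IU = (g 1 - g (-1)) / 2 + IUF := by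
    have hcongr : ∫ x in (-1 : ℝ)..1, (s * S).re * eU x
        = ∫ x in (-1 : ℝ)..1, (r x + eUF x) := by
      apply intervalIntegral.integral_congr
      intro x hx
      rw [huIcc] at hx
      exact hpt x hx
    rw [intervalIntegral.integral_const_mul, intervalIntegral.integral_add int_r int_eUF,
      hint_r] at hcongr
    exact hcongr
  -- norms
  have hnU : normP U = Real.sqrt (IU / 2) := by
    rw [hnorm U]
    congr 1
    rw [intervalIntegral.integral_const_mul]
    ring
  have hnF : normP F = Real.sqrt (IF / 2) := by
    rw [hnorm F]
    congr 1
    rw [intervalIntegral.integral_const_mul]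
    ring
  have hnU0 : 0 ≤ normP U := hnU ▸ Real.sqrt_nonneg _
  have hnF0 : 0 ≤ normP F := hnF ▸ Real.sqrt_nonneg _
  have hnU2 : (normP U) ^ 2 = IU / 2 := by
    rw [hnU, Real.sq_sqrt (by linarith)]
  -- Cauchy-Schwarz
  have hq : ∀ t : ℝ, 0 ≤ IF * (t * t) + (2 * IUF) * t + IU := by
    intro t
    have hpt2 : ∀ x ∈ I, eF x * (t * t) + eUF x * (2 * t) + eU x
        = (star (U x + (t : ℂ) • F x) ⬝ᵥ
            (P⁻¹.map Complex.ofReal).mulVec (U x + (t : ℂ) • F x)).re := by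
      intro x hx
      have hFU : (star (F x) ⬝ᵥ (P⁻¹.map Complex.ofReal).mulVec (U x)).re = eUF x := by
        rw [← pml_conj_quad P⁻¹ hPinvSymm (U x) (F x), Complex.conj_re]
      rw [star_add, star_smul, Matrix.mulVec_add, Matrix.mulVec_smul,
        add_dotProduct, smul_dotProduct, dotProduct_add,
        dotProduct_smul, dotProduct_add, dotProduct_smul]
      simp only [smul_eq_mul, Complex.add_re, star_trivial, RCLike.star_def,
        Complex.conj_ofReal, Complex.re_ofReal_mul, hFU]
      ring
    have h0 : 0 ≤ ∫ x in (-1 : ℝ)..1, (eF x * (t * t) + eUF x * (2 * t) + eU x) := by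
      apply intervalIntegral.integral_nonneg (by norm_num)
      intro x hx
      rw [hpt2 x hx]
      exact pml_re_nonneg _ hPinvPSD _
    rw [intervalIntegral.integral_add ((int_eF.mul_const _).add (int_eUF.mul_const _)) int_eU,
      intervalIntegral.integral_add (int_eF.mul_const _) (int_eUF.mul_const _),
      intervalIntegral.integral_mul_const, intervalIntegral.integral_mul_const] at h0
    calc (0:ℝ) ≤ IF * (t * t) + IUF * (2 * t) + IU := h0
      _ = IF * (t * t) + (2 * IUF) * t + IU := by ring
  have hcs : IUF ≤ Real.sqrt IU * Real.sqrt IF := by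
    have hdisc := discrim_le_zero hq
    rw [discrim] at hdisc
    have h1 : IUF ^ 2 ≤ IU * IF := by nlinarith
    calc IUF ≤ |IUF| := le_abs_self _
      _ = Real.sqrt (IUF ^ 2) := (Real.sqrt_sq_eq_abs _).symm
      _ ≤ Real.sqrt (IU * IF) := Real.sqrt_le_sqrt h1
      _ = Real.sqrt IU * Real.sqrt IF := Real.sqrt_mul hIU0 _
  have hprod : normP U * normP F = Real.sqrt IU * Real.sqrt IF / 2 := by
    rw [hnU, hnF, Real.sqrt_div hIU0, Real.sqrt_div hIF0, div_mul_div_comm,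
      Real.mul_self_sqrt (by norm_num : (0:ℝ) ≤ 2)]
  have hBT' : BT = (g 1 - g (-1)) / 4 := by rw [hBT]; simp only [hgdef]; ring
  have hmain : (s * S).re * (normP U) ^ 2 ≤ normP U * normP F + BT := by
    rw [hnU2, hBT', hprod]
    have : (s * S).re * (IU / 2) = (g 1 - g (-1)) / 4 + IUF / 2 := by
      have := hIntEq
      linarith [hIntEq]
    linarith [hcs]
  refine ⟨hre_sS, haγ, hmain, ?_⟩
  intro hBTle
  have h1 : (a * γ) * (normP U) ^ 2 ≤ normP U * normP F := by
    have h2 : (s * S).re * (normP U) ^ 2 ≤ normP U * normP F := by linarith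
    nlinarith [sq_nonneg (normP U)]
  rcases eq_or_lt_of_le hnU0 with h | h
  · rw [← h]
    positivity
  · have h3 : a * γ * normP U ≤ normP F := by
      have h4 : (a * γ * normP U) * normP U ≤ normP F * normP U := by nlinarith
      exact le_of_mul_le_mul_right h4 h
    rw [show (1 / (a * γ)) * normP F = normP F / (a * γ) by ring, le_div_iff₀ haγ]
    nlinarith
end

section
/- (3D PML corner energy estimate in Laplace space.) Let P be a real symmetric positive definite m×m matrix, A_x, A_y, A_z real symmetric m×m matrices, let d ≥ 0, α ≥ 0, γ > 0 be real, let s = a + ib ∈ ℂ with a > 0, and S = γ(1 + d/(s+α)). Let Ũ : [−1,1]³ → ℂ^m be continuously differentiable and F̃ continuous, satisfying the PML corner equation (sS)·Pˉ¹·Ũ = Σ_{ξ=x,y,z} A_ξ ∂Ũ/∂ξ + Pˉ¹·F̃ on [−1,1]³. Define ‖G‖_P² = ∫_{[−1,1]³} ½ G† Pˉ¹ G dx dy dz and BT = ¼ Σ_{ξ∈{x,y,z}} ∫ ( Ũ†A_ξŨ |_{ξ=1} − Ũ†A_ξŨ |_{ξ=−1} ) dσ over the corresponding faces. Then Re(sS)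 ≥ aγ > 0 and Re(sS)·‖Ũ‖_P² ≤ ‖Ũ‖_P·‖F̃‖_P + BT. -/
open Matrix

lemma quad_re {m : ℕ} (M : Matrix (Fin m) (Fin m) ℝ) (v w : Fin m → ℂ) :
    (star v ⬝ᵥ (M.map Complex.ofReal).mulVec w).re
      = (fun i => (v i).re) ⬝ᵥ M.mulVec (fun i => (w i).re)
        + (fun i => (v i).im) ⬝ᵥ M.mulVec (fun i => (w i).im) := by
  simp only [dotProduct, mulVec, map_apply, Pi.star_apply, Complex.re_sum, Finset.mul_sum,
    Finset.sum_mul, ← Finset.sum_add_distrib]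
  refine Finset.sum_congr rfl fun i _ => Finset.sum_congr rfl fun j _ => ?_
  simp [Complex.mul_re, Complex.mul_im, RCLike.star_def, Complex.conj_re, Complex.conj_im]
  try ring

lemma quad_im {m : ℕ} (M : Matrix (Fin m) (Fin m) ℝ) (v w : Fin m → ℂ) :
    (star v ⬝ᵥ (M.map Complex.ofReal).mulVec w).im
      = (fun i => (v i).re) ⬝ᵥ M.mulVec (fun i => (w i).im)
        - (fun i => (v i).im) ⬝ᵥ M.mulVec (fun i => (w i).re) := by
  simp only [dotProduct, mulVec, map_apply, Pi.star_apply, Complex.im_sum, Finset.mul_sum,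
    Finset.sum_mul, ← Finset.sum_sub_distrib]
  refine Finset.sum_congr rfl fun i _ => Finset.sum_congr rfl fun j _ => ?_
  simp [Complex.mul_re, Complex.mul_im, RCLike.star_def, Complex.conj_re, Complex.conj_im]
  try ring

lemma symm_swap {m : ℕ} {M : Matrix (Fin m) (Fin m) ℝ} (hM : M.IsSymm) (x y : Fin m → ℝ) :
    x ⬝ᵥ M.mulVec y = y ⬝ᵥ M.mulVec x := by
  rw [dotProduct_mulVec, ← mulVec_transpose, hM.eq, dotProduct_comm]

lemma real_CS {m : ℕ} {M : Matrix (Fin m) (Fin m) ℝ} (hM : M.IsSymm)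
    (hpos : ∀ x : Fin m → ℝ, 0 ≤ x ⬝ᵥ M.mulVec x) (x y : Fin m → ℝ) :
    x ⬝ᵥ M.mulVec y ≤ Real.sqrt (x ⬝ᵥ M.mulVec x) * Real.sqrt (y ⬝ᵥ M.mulVec y) := by
  set A := x ⬝ᵥ M.mulVec x with hA
  set B := y ⬝ᵥ M.mulVec y with hB
  set C := x ⬝ᵥ M.mulVec y with hC
  have key : ∀ t : ℝ, 0 ≤ A * (t * t) + (2 * C) * t + B := by
    intro t
    have h := hpos (t • x + y)
    have : (t • x + y) ⬝ᵥ M.mulVec (t • x + y) = A * (t*t) + (2*C)*t + B := by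
      simp only [mulVec_add, mulVec_smul, dotProduct_add, add_dotProduct, dotProduct_smul,
        smul_dotProduct, smul_eq_mul, hA, hB, hC]
      rw [symm_swap hM y x]
      ring
    linarith [this ▸ h]
  have hd := discrim_le_zero key
  rw [discrim] at hd
  have hC2 : C^2 ≤ A * B := by nlinarith
  calc C ≤ |C| := le_abs_self C
    _ = Real.sqrt (C^2) := (Real.sqrt_sq_eq_abs C).symm
    _ ≤ Real.sqrt (A*B) := Real.sqrt_le_sqrt hC2
    _ = Real.sqrt A * Real.sqrt B := Real.sqrt_mul (hpos x) _

lemma sqrt_pair_CS {p q r t : ℝ} (hp : 0 ≤ p) (hq : 0 ≤ q) (hr : 0 ≤ r) (ht : 0 ≤ t) :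
    Real.sqrt p * Real.sqrt q + Real.sqrt r * Real.sqrt t
      ≤ Real.sqrt (p + r) * Real.sqrt (q + t) := by
  set A := Real.sqrt p; set B := Real.sqrt q; set C := Real.sqrt r; set D := Real.sqrt t
  have hA : A^2 = p := Real.sq_sqrt hp
  have hB : B^2 = q := Real.sq_sqrt hq
  have hC : C^2 = r := Real.sq_sqrt hr
  have hD : D^2 = t := Real.sq_sqrt ht
  have hA0 : 0 ≤ A := Real.sqrt_nonneg _
  have hB0 : 0 ≤ B := Real.sqrt_nonneg _
  have hC0 : 0 ≤ C := Real.sqrt_nonneg _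
  have hD0 : 0 ≤ D := Real.sqrt_nonneg _
  have key : A * B + C * D ≤ Real.sqrt ((p+r) * (q+t)) := by
    rw [Real.le_sqrt (by positivity) (by positivity)]
    nlinarith [sq_nonneg (A*D - C*B)]
  rwa [Real.sqrt_mul (by positivity)] at key

lemma herm_nonneg {m : ℕ} {M : Matrix (Fin m) (Fin m) ℝ}
    (hpos : ∀ x : Fin m → ℝ, 0 ≤ x ⬝ᵥ M.mulVec x) (v : Fin m → ℂ) :
    0 ≤ (star v ⬝ᵥ (M.map Complex.ofReal).mulVec v).re := by
  rw [quad_re]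
  exact add_nonneg (hpos _) (hpos _)

lemma herm_CS {m : ℕ} {M : Matrix (Fin m) (Fin m) ℝ} (hM : M.IsSymm)
    (hpos : ∀ x : Fin m → ℝ, 0 ≤ x ⬝ᵥ M.mulVec x) (v w : Fin m → ℂ) :
    (star v ⬝ᵥ (M.map Complex.ofReal).mulVec w).re
      ≤ Real.sqrt ((star v ⬝ᵥ (M.map Complex.ofReal).mulVec v).re)
        * Real.sqrt ((star w ⬝ᵥ (M.map Complex.ofReal).mulVec w).re) := by
  rw [quad_re, quad_re, quad_re]
  calc (fun i => (v i).re) ⬝ᵥ M.mulVec (fun i => (w i).re)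
        + (fun i => (v i).im) ⬝ᵥ M.mulVec (fun i => (w i).im)
      ≤ Real.sqrt ((fun i => (v i).re) ⬝ᵥ M.mulVec (fun i => (v i).re))
          * Real.sqrt ((fun i => (w i).re) ⬝ᵥ M.mulVec (fun i => (w i).re))
        + Real.sqrt ((fun i => (v i).im) ⬝ᵥ M.mulVec (fun i => (v i).im))
          * Real.sqrt ((fun i => (w i).im) ⬝ᵥ M.mulVec (fun i => (w i).im)) :=
      add_le_add (real_CS hM hpos _ _) (real_CS hM hpos _ _)
    _ ≤ _ := sqrt_pair_CS (hpos _) (hpos _) (hpos _) (hpos _)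

lemma II_swap (f : ℝ → ℝ → ℝ) (hf : Continuous fun p : ℝ × ℝ => f p.1 p.2) :
    (∫ x in (-1:ℝ)..1, ∫ y in (-1:ℝ)..1, f x y)
      = ∫ y in (-1:ℝ)..1, ∫ x in (-1:ℝ)..1, f x y := by
  have h1 : (-1:ℝ) ≤ 1 := by norm_num
  simp only [intervalIntegral.integral_of_le h1]
  have hint : MeasureTheory.Integrable (Function.uncurry f)
      ((MeasureTheory.volume.restrict (Set.Ioc (-1:ℝ) 1)).prod
        (MeasureTheory.volume.restrict (Set.Ioc (-1:ℝ) 1))) := by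
    rw [MeasureTheory.Measure.prod_restrict]
    refine MeasureTheory.IntegrableOn.mono_set ?_
      (Set.prod_mono Set.Ioc_subset_Icc_self Set.Ioc_subset_Icc_self)
    exact hf.continuousOn.integrableOn_compact (isCompact_Icc.prod isCompact_Icc)
  exact MeasureTheory.integral_integral_swap hint

lemma II_CS (u v : ℝ → ℝ) (hu : Continuous u) (hv : Continuous v)
    (hu0 : ∀ x, 0 ≤ u x) (hv0 : ∀ x, 0 ≤ v x) :
    (∫ x in (-1:ℝ)..1, u x * v x)
      ≤ Real.sqrt (∫ x in (-1:ℝ)..1, u x ^ 2) * Real.sqrt (∫ x in (-1:ℝ)..1, v x ^ 2) := by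
  set A := ∫ x in (-1:ℝ)..1, u x ^ 2 with hA
  set B := ∫ x in (-1:ℝ)..1, v x ^ 2 with hB
  set C := ∫ x in (-1:ℝ)..1, u x * v x with hC
  have h1 : (-1:ℝ) ≤ 1 := by norm_num
  have hiu : IntervalIntegrable (fun x => u x ^ 2) MeasureTheory.volume (-1) 1 :=
    (hu.pow 2).intervalIntegrable _ _
  have hiv : IntervalIntegrable (fun x => v x ^ 2) MeasureTheory.volume (-1) 1 :=
    (hv.pow 2).intervalIntegrable _ _
  have hiuv : IntervalIntegrable (fun x => u x * v x) MeasureTheory.volume (-1) 1 :=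
    (hu.mul hv).intervalIntegrable _ _
  have hA0 : 0 ≤ A := intervalIntegral.integral_nonneg h1 (fun x _ => sq_nonneg _)
  have hB0 : 0 ≤ B := intervalIntegral.integral_nonneg h1 (fun x _ => sq_nonneg _)
  have hC0 : 0 ≤ C := intervalIntegral.integral_nonneg h1
    (fun x _ => mul_nonneg (hu0 x) (hv0 x))
  have key : ∀ t : ℝ, 0 ≤ A * (t * t) + (2 * C) * t + B := by
    intro t
    have expand : (∫ x in (-1:ℝ)..1, (t * u x + v x) ^ 2) = A * (t*t) + (2*C)*t + B := by
      have : ∀ x : ℝ, (t * u x + v x) ^ 2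
          = (t*t) * u x ^ 2 + (2*t) * (u x * v x) + v x ^ 2 := by intro x; ring
      rw [intervalIntegral.integral_congr (fun x _ => this x)]
      rw [intervalIntegral.integral_add ((hiu.const_mul _).add (hiuv.const_mul _)) hiv,
        intervalIntegral.integral_add (hiu.const_mul _) (hiuv.const_mul _),
        intervalIntegral.integral_const_mul, intervalIntegral.integral_const_mul]
      rw [← hA, ← hB, ← hC]; ring
    rw [← expand]
    exact intervalIntegral.integral_nonneg h1 (fun x _ => sq_nonneg _)
  have hd := discrim_le_zero key
  rw [discrim] at hd
  rw [← Real.sqrt_mul hA0]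
  rw [Real.le_sqrt hC0 (by positivity)]
  nlinarith

lemma bilin_deriv {m : ℕ} {M : Matrix (Fin m) (Fin m) ℝ} (hM : M.IsSymm)
    {g : ℝ → Fin m → ℝ} {g' : Fin m → ℝ} {s : Set ℝ} {x : ℝ}
    (h : ∀ i, HasDerivWithinAt (fun t => g t i) (g' i) s x) :
    HasDerivWithinAt (fun t => g t ⬝ᵥ M.mulVec (g t)) (2 * (g x ⬝ᵥ M.mulVec g')) s x := by
  have main : HasDerivWithinAt (fun t => g t ⬝ᵥ M.mulVec (g t))
      (∑ i, (g' i * ∑ j, M i j * g x j + g x i * ∑ j, M i j * g' j)) s x := by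
    simp only [dotProduct, mulVec]
    exact HasDerivWithinAt.fun_sum fun i _ =>
      (h i).mul (HasDerivWithinAt.fun_sum fun j _ => (h j).const_mul (M i j))
  have hval : (∑ i, (g' i * ∑ j, M i j * g x j + g x i * ∑ j, M i j * g' j))
      = 2 * (g x ⬝ᵥ M.mulVec g') := by
    rw [Finset.sum_add_distrib]
    have e1 : (∑ i, g' i * ∑ j, M i j * g x j) = g' ⬝ᵥ M.mulVec (g x) := rfl
    have e2 : (∑ i, g x i * ∑ j, M i j * g' j) = g x ⬝ᵥ M.mulVec g' := rfl
    rw [e1, e2, symm_swap hM g' (g x)]; ring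
  exact hval ▸ main

lemma herm_deriv {m : ℕ} {M : Matrix (Fin m) (Fin m) ℝ} (hM : M.IsSymm)
    {f : ℝ → Fin m → ℂ} {v' : Fin m → ℂ} {s : Set ℝ} {x : ℝ}
    (hf : HasDerivWithinAt f v' s x) :
    HasDerivWithinAt (fun t => (star (f t) ⬝ᵥ (M.map Complex.ofReal).mulVec (f t)).re)
      (2 * (star (f x) ⬝ᵥ (M.map Complex.ofReal).mulVec v').re) s x := by
  have hcoord : ∀ i, HasDerivWithinAt (fun t => f t i) (v' i) s x := hasDerivWithinAt_pi.mp hf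
  have hre : ∀ i, HasDerivWithinAt (fun t => (f t i).re) ((v' i).re) s x := fun i =>
    Complex.reCLM.hasFDerivAt.comp_hasDerivWithinAt x (hcoord i)
  have him : ∀ i, HasDerivWithinAt (fun t => (f t i).im) ((v' i).im) s x := fun i =>
    Complex.imCLM.hasFDerivAt.comp_hasDerivWithinAt x (hcoord i)
  have h1 := bilin_deriv hM (g := fun t i => (f t i).re) (g' := fun i => (v' i).re) hre
  have h2 := bilin_deriv hM (g := fun t i => (f t i).im) (g' := fun i => (v' i).im) him
  have hsum := h1.add h2
  have hfun : (fun t => (fun i => (f t i).re) ⬝ᵥ M.mulVec (fun i => (f t i).re)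
      + (fun i => (f t i).im) ⬝ᵥ M.mulVec (fun i => (f t i).im))
      = fun t => (star (f t) ⬝ᵥ (M.map Complex.ofReal).mulVec (f t)).re := by
    funext t; rw [quad_re]
  have hval : 2 * ((fun i => (f x i).re) ⬝ᵥ M.mulVec fun i => (v' i).re)
      + 2 * ((fun i => (f x i).im) ⬝ᵥ M.mulVec fun i => (v' i).im)
      = 2 * (star (f x) ⬝ᵥ (M.map Complex.ofReal).mulVec v').re := by
    rw [quad_re]; ring
  rw [← hfun, ← hval]
  exact hsum

lemma II_FTC (g g' : ℝ → ℝ)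
    (hg : ∀ x ∈ Set.Icc (-1:ℝ) 1, HasDerivWithinAt g (g' x) (Set.Icc (-1:ℝ) 1) x)
    (hg' : Continuous g') : ∫ x in (-1:ℝ)..1, g' x = g 1 - g (-1) := by
  apply intervalIntegral.integral_eq_sub_of_hasDeriv_right_of_le (by norm_num)
    (fun x hx => (hg x hx).continuousWithinAt)
  · intro x hx
    exact ((hg x (Set.Ioo_subset_Icc_self hx)).hasDerivAt
      (Icc_mem_nhds hx.1 hx.2)).hasDerivWithinAt
  · exact hg'.intervalIntegrable _ _

lemma cont_param1 (f : ℝ → ℝ → ℝ) (hf : Continuous fun p : ℝ × ℝ => f p.1 p.2) :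
    Continuous fun x => ∫ y in (-1:ℝ)..1, f x y := by
  apply intervalIntegral.continuous_parametric_intervalIntegral_of_continuous'
  exact hf

lemma cont_param2 (f : ℝ → ℝ → ℝ → ℝ)
    (hf : Continuous fun q : ℝ × ℝ × ℝ => f q.1 q.2.1 q.2.2) :
    Continuous fun p : ℝ × ℝ => ∫ z in (-1:ℝ)..1, f p.1 p.2 z := by
  apply intervalIntegral.continuous_parametric_intervalIntegral_of_continuous'
    (f := fun (p : ℝ × ℝ) z => f p.1 p.2 z)
  exact hf.comp (((continuous_fst.comp continuous_fst).prodMk ((continuous_snd.comp continuous_fst).prodMk continuous_snd)))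

lemma trip_nonneg (f : ℝ → ℝ → ℝ → ℝ) (h : ∀ x y z, 0 ≤ f x y z) :
    0 ≤ ∫ x in (-1:ℝ)..1, ∫ y in (-1:ℝ)..1, ∫ z in (-1:ℝ)..1, f x y z := by
  have h1 : (-1:ℝ) ≤ 1 := by norm_num
  exact intervalIntegral.integral_nonneg h1 fun x _ =>
    intervalIntegral.integral_nonneg h1 fun y _ =>
      intervalIntegral.integral_nonneg h1 fun z _ => h x y z

lemma II_CS' (w F G : ℝ → ℝ) (hw : Continuous w) (hF : Continuous F) (hG : Continuous G)
    (hF0 : ∀ y, 0 ≤ F y) (hG0 : ∀ y, 0 ≤ G y)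
    (hle : ∀ y ∈ Set.Icc (-1:ℝ) 1, w y ≤ F y * G y) :
    (∫ y in (-1:ℝ)..1, w y)
      ≤ Real.sqrt (∫ y in (-1:ℝ)..1, F y ^ 2) * Real.sqrt (∫ y in (-1:ℝ)..1, G y ^ 2) := by
  have h1 : (-1:ℝ) ≤ 1 := by norm_num
  have m1 : (∫ y in (-1:ℝ)..1, w y) ≤ ∫ y in (-1:ℝ)..1, F y * G y :=
    intervalIntegral.integral_mono_on h1 (hw.intervalIntegrable _ _)
      ((hF.mul hG).intervalIntegrable _ _) hle
  have m2 := II_CS F G hF hG hF0 hG0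
  linarith

lemma II_CS2 (u v : ℝ → ℝ → ℝ)
    (hu : Continuous fun p : ℝ × ℝ => u p.1 p.2) (hv : Continuous fun p : ℝ × ℝ => v p.1 p.2)
    (hu0 : ∀ x y, 0 ≤ u x y) (hv0 : ∀ x y, 0 ≤ v x y) :
    (∫ x in (-1:ℝ)..1, ∫ y in (-1:ℝ)..1, u x y * v x y)
      ≤ Real.sqrt (∫ x in (-1:ℝ)..1, ∫ y in (-1:ℝ)..1, u x y ^ 2)
        * Real.sqrt (∫ x in (-1:ℝ)..1, ∫ y in (-1:ℝ)..1, v x y ^ 2) := by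
  have h1 : (-1:ℝ) ≤ 1 := by norm_num
  have hFc : Continuous fun x => Real.sqrt (∫ y in (-1:ℝ)..1, u x y ^ 2) :=
    (cont_param1 (fun x y => u x y ^ 2) (hu.pow 2)).sqrt
  have hGc : Continuous fun x => Real.sqrt (∫ y in (-1:ℝ)..1, v x y ^ 2) :=
    (cont_param1 (fun x y => v x y ^ 2) (hv.pow 2)).sqrt
  have key := II_CS' (fun x => ∫ y in (-1:ℝ)..1, u x y * v x y)
    (fun x => Real.sqrt (∫ y in (-1:ℝ)..1, u x y ^ 2))
    (fun x => Real.sqrt (∫ y in (-1:ℝ)..1, v x y ^ 2))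
    (cont_param1 (fun x y => u x y * v x y) (hu.mul hv)) hFc hGc
    (fun x => Real.sqrt_nonneg _) (fun x => Real.sqrt_nonneg _)
    (fun x _ => II_CS (u x) (v x)
      (hu.comp (continuous_const.prodMk continuous_id))
      (hv.comp (continuous_const.prodMk continuous_id))
      (hu0 x) (hv0 x))
  have eU : (∫ x in (-1:ℝ)..1, (Real.sqrt (∫ y in (-1:ℝ)..1, u x y ^ 2)) ^ 2)
      = ∫ x in (-1:ℝ)..1, ∫ y in (-1:ℝ)..1, u x y ^ 2 :=
    intervalIntegral.integral_congr fun x _ =>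
      Real.sq_sqrt (intervalIntegral.integral_nonneg h1 fun y _ => sq_nonneg _)
  have eV : (∫ x in (-1:ℝ)..1, (Real.sqrt (∫ y in (-1:ℝ)..1, v x y ^ 2)) ^ 2)
      = ∫ x in (-1:ℝ)..1, ∫ y in (-1:ℝ)..1, v x y ^ 2 :=
    intervalIntegral.integral_congr fun x _ =>
      Real.sq_sqrt (intervalIntegral.integral_nonneg h1 fun y _ => sq_nonneg _)
  rw [eU, eV] at key
  exact key

lemma trip_CS (u v : ℝ → ℝ → ℝ → ℝ)
    (hu : Continuous fun q : ℝ × ℝ × ℝ => u q.1 q.2.1 q.2.2)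
    (hv : Continuous fun q : ℝ × ℝ × ℝ => v q.1 q.2.1 q.2.2)
    (hu0 : ∀ x y z, 0 ≤ u x y z) (hv0 : ∀ x y z, 0 ≤ v x y z) :
    (∫ x in (-1:ℝ)..1, ∫ y in (-1:ℝ)..1, ∫ z in (-1:ℝ)..1, u x y z * v x y z)
      ≤ Real.sqrt (∫ x in (-1:ℝ)..1, ∫ y in (-1:ℝ)..1, ∫ z in (-1:ℝ)..1, u x y z ^ 2)
        * Real.sqrt (∫ x in (-1:ℝ)..1, ∫ y in (-1:ℝ)..1, ∫ z in (-1:ℝ)..1, v x y z ^ 2) := by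
  have h1 : (-1:ℝ) ≤ 1 := by norm_num
  have hsub : ∀ x : ℝ, Continuous fun p : ℝ × ℝ => u x p.1 p.2 := fun x =>
    hu.comp (continuous_const.prodMk (continuous_fst.prodMk continuous_snd))
  have hsubv : ∀ x : ℝ, Continuous fun p : ℝ × ℝ => v x p.1 p.2 := fun x =>
    hv.comp (continuous_const.prodMk (continuous_fst.prodMk continuous_snd))
  have hFc : Continuous fun x => Real.sqrt (∫ y in (-1:ℝ)..1, ∫ z in (-1:ℝ)..1, u x y z ^ 2) :=
    (cont_param1 (fun x y => ∫ z in (-1:ℝ)..1, u x y z ^ 2)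
      (cont_param2 (fun x y z => u x y z ^ 2) (hu.pow 2))).sqrt
  have hGc : Continuous fun x => Real.sqrt (∫ y in (-1:ℝ)..1, ∫ z in (-1:ℝ)..1, v x y z ^ 2) :=
    (cont_param1 (fun x y => ∫ z in (-1:ℝ)..1, v x y z ^ 2)
      (cont_param2 (fun x y z => v x y z ^ 2) (hv.pow 2))).sqrt
  have key := II_CS' (fun x => ∫ y in (-1:ℝ)..1, ∫ z in (-1:ℝ)..1, u x y z * v x y z)
    (fun x => Real.sqrt (∫ y in (-1:ℝ)..1, ∫ z in (-1:ℝ)..1, u x y z ^ 2))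
    (fun x => Real.sqrt (∫ y in (-1:ℝ)..1, ∫ z in (-1:ℝ)..1, v x y z ^ 2))
    (cont_param1 (fun x y => ∫ z in (-1:ℝ)..1, u x y z * v x y z)
      (cont_param2 (fun x y z => u x y z * v x y z) (hu.mul hv)))
    hFc hGc (fun x => Real.sqrt_nonneg _) (fun x => Real.sqrt_nonneg _)
    (fun x _ => II_CS2 (u x) (v x) (hsub x) (hsubv x) (hu0 x) (hv0 x))
  have eU : (∫ x in (-1:ℝ)..1,
        (Real.sqrt (∫ y in (-1:ℝ)..1, ∫ z in (-1:ℝ)..1, u x y z ^ 2)) ^ 2)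
      = ∫ x in (-1:ℝ)..1, ∫ y in (-1:ℝ)..1, ∫ z in (-1:ℝ)..1, u x y z ^ 2 :=
    intervalIntegral.integral_congr fun x _ =>
      Real.sq_sqrt (intervalIntegral.integral_nonneg h1 fun y _ =>
        intervalIntegral.integral_nonneg h1 fun z _ => sq_nonneg _)
  have eV : (∫ x in (-1:ℝ)..1,
        (Real.sqrt (∫ y in (-1:ℝ)..1, ∫ z in (-1:ℝ)..1, v x y z ^ 2)) ^ 2)
      = ∫ x in (-1:ℝ)..1, ∫ y in (-1:ℝ)..1, ∫ z in (-1:ℝ)..1, v x y z ^ 2 :=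
    intervalIntegral.integral_congr fun x _ =>
      Real.sq_sqrt (intervalIntegral.integral_nonneg h1 fun y _ =>
        intervalIntegral.integral_nonneg h1 fun z _ => sq_nonneg _)
  rw [eU, eV] at key
  exact key

lemma cont_mulVec {X : Type*} [TopologicalSpace X] {m : ℕ} (A : Matrix (Fin m) (Fin m) ℂ)
    {f : X → Fin m → ℂ} (hf : Continuous f) : Continuous fun p => A.mulVec (f p) := by
  refine continuous_pi fun i => ?_
  simp only [mulVec, dotProduct]
  exact continuous_finset_sum _ fun j _ => continuous_const.mul ((continuous_apply j).comp hf)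

lemma cont_quad {X : Type*} [TopologicalSpace X] {m : ℕ} (M : Matrix (Fin m) (Fin m) ℝ)
    {f g : X → Fin m → ℂ} (hf : Continuous f) (hg : Continuous g) :
    Continuous fun p => (star (f p) ⬝ᵥ (M.map Complex.ofReal).mulVec (g p)).re := by
  apply Complex.continuous_re.comp
  simp only [dotProduct, mulVec, Matrix.map_apply, Pi.star_apply]
  exact continuous_finset_sum _ fun i _ =>
    (continuous_star.comp ((continuous_apply i).comp hf)).mul
      (continuous_finset_sum _ fun j _ =>
        continuous_const.mul ((continuous_apply j).comp hg))

lemma trip_mono (f g : ℝ → ℝ → ℝ → ℝ)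
    (hf : Continuous fun q : ℝ × ℝ × ℝ => f q.1 q.2.1 q.2.2)
    (hg : Continuous fun q : ℝ × ℝ × ℝ => g q.1 q.2.1 q.2.2)
    (hle : ∀ x y z, f x y z ≤ g x y z) :
    (∫ x in (-1:ℝ)..1, ∫ y in (-1:ℝ)..1, ∫ z in (-1:ℝ)..1, f x y z)
      ≤ ∫ x in (-1:ℝ)..1, ∫ y in (-1:ℝ)..1, ∫ z in (-1:ℝ)..1, g x y z := by
  have h1 : (-1:ℝ) ≤ 1 := by norm_num
  have hsl : ∀ (f : ℝ → ℝ → ℝ → ℝ), (Continuous fun q : ℝ × ℝ × ℝ => f q.1 q.2.1 q.2.2) →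
      ∀ x y, Continuous fun z => f x y z := fun f hf x y =>
    hf.comp (continuous_const.prodMk (continuous_const.prodMk continuous_id))
  apply intervalIntegral.integral_mono_on h1
    ((cont_param1 (fun x y => ∫ z in (-1:ℝ)..1, f x y z)
      (cont_param2 f hf)).intervalIntegrable _ _)
    ((cont_param1 (fun x y => ∫ z in (-1:ℝ)..1, g x y z)
      (cont_param2 g hg)).intervalIntegrable _ _)
  intro x _
  apply intervalIntegral.integral_mono_on h1
    (((cont_param2 f hf).comp (continuous_const.prodMk continuous_id)).intervalIntegrable _ _)
    (((cont_param2 g hg).comp (continuous_const.prodMk continuous_id)).intervalIntegrable _ _)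
  intro y _
  apply intervalIntegral.integral_mono_on h1
    ((hsl f hf x y).intervalIntegrable _ _) ((hsl g hg x y).intervalIntegrable _ _)
  exact fun z _ => hle x y z

lemma trip_congr {f g : ℝ → ℝ → ℝ → ℝ}
    (h : ∀ x ∈ Set.Icc (-1:ℝ) 1, ∀ y ∈ Set.Icc (-1:ℝ) 1, ∀ z ∈ Set.Icc (-1:ℝ) 1,
      f x y z = g x y z) :
    (∫ x in (-1:ℝ)..1, ∫ y in (-1:ℝ)..1, ∫ z in (-1:ℝ)..1, f x y z)
      = ∫ x in (-1:ℝ)..1, ∫ y in (-1:ℝ)..1, ∫ z in (-1:ℝ)..1, g x y z := by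
  have hu : Set.uIcc (-1:ℝ) 1 = Set.Icc (-1:ℝ) 1 := Set.uIcc_of_le (by norm_num)
  refine intervalIntegral.integral_congr fun x hx => ?_
  refine intervalIntegral.integral_congr fun y hy => ?_
  refine intervalIntegral.integral_congr fun z hz => ?_
  exact h x (hu ▸ hx) y (hu ▸ hy) z (hu ▸ hz)

lemma trip_smul (c : ℝ) (f : ℝ → ℝ → ℝ → ℝ) :
    (∫ x in (-1:ℝ)..1, ∫ y in (-1:ℝ)..1, ∫ z in (-1:ℝ)..1, c * f x y z)
      = c * ∫ x in (-1:ℝ)..1, ∫ y in (-1:ℝ)..1, ∫ z in (-1:ℝ)..1, f x y z := by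
  rw [← intervalIntegral.integral_const_mul]
  refine intervalIntegral.integral_congr fun x _ => ?_
  rw [← intervalIntegral.integral_const_mul]
  refine intervalIntegral.integral_congr fun y _ => ?_
  rw [← intervalIntegral.integral_const_mul]

lemma trip_add (f g : ℝ → ℝ → ℝ → ℝ)
    (hf : Continuous fun q : ℝ × ℝ × ℝ => f q.1 q.2.1 q.2.2)
    (hg : Continuous fun q : ℝ × ℝ × ℝ => g q.1 q.2.1 q.2.2) :
    (∫ x in (-1:ℝ)..1, ∫ y in (-1:ℝ)..1, ∫ z in (-1:ℝ)..1, (f x y z + g x y z))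
      = (∫ x in (-1:ℝ)..1, ∫ y in (-1:ℝ)..1, ∫ z in (-1:ℝ)..1, f x y z)
        + ∫ x in (-1:ℝ)..1, ∫ y in (-1:ℝ)..1, ∫ z in (-1:ℝ)..1, g x y z := by
  have hsl : ∀ (f : ℝ → ℝ → ℝ → ℝ), (Continuous fun q : ℝ × ℝ × ℝ => f q.1 q.2.1 q.2.2) →
      ∀ x y, Continuous fun z => f x y z := fun f hf x y =>
    hf.comp (continuous_const.prodMk (continuous_const.prodMk continuous_id))
  have inner2 : ∀ x y, (∫ z in (-1:ℝ)..1, (f x y z + g x y z))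
      = (∫ z in (-1:ℝ)..1, f x y z) + ∫ z in (-1:ℝ)..1, g x y z := fun x y =>
    intervalIntegral.integral_add ((hsl f hf x y).intervalIntegrable _ _)
      ((hsl g hg x y).intervalIntegrable _ _)
  have inner1 : ∀ x, (∫ y in (-1:ℝ)..1, ∫ z in (-1:ℝ)..1, (f x y z + g x y z))
      = (∫ y in (-1:ℝ)..1, ∫ z in (-1:ℝ)..1, f x y z)
        + ∫ y in (-1:ℝ)..1, ∫ z in (-1:ℝ)..1, g x y z := by
    intro x
    rw [intervalIntegral.integral_congr (g := fun y =>
      (∫ z in (-1:ℝ)..1, f x y z) + ∫ z in (-1:ℝ)..1, g x y z) (fun y _ => inner2 x y)]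
    exact intervalIntegral.integral_add
      (((cont_param2 f hf).comp (continuous_const.prodMk continuous_id)).intervalIntegrable _ _)
      (((cont_param2 g hg).comp (continuous_const.prodMk continuous_id)).intervalIntegrable _ _)
  rw [intervalIntegral.integral_congr (g := fun x =>
    (∫ y in (-1:ℝ)..1, ∫ z in (-1:ℝ)..1, f x y z)
      + ∫ y in (-1:ℝ)..1, ∫ z in (-1:ℝ)..1, g x y z) (fun x _ => inner1 x)]
  exact intervalIntegral.integral_add
    ((cont_param1 (fun x y => ∫ z in (-1:ℝ)..1, f x y z)
      (cont_param2 f hf)).intervalIntegrable _ _)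
    ((cont_param1 (fun x y => ∫ z in (-1:ℝ)..1, g x y z)
      (cont_param2 g hg)).intervalIntegrable _ _)

lemma dbl_congr {f g : ℝ → ℝ → ℝ}
    (h : ∀ x ∈ Set.Icc (-1:ℝ) 1, ∀ y ∈ Set.Icc (-1:ℝ) 1, f x y = g x y) :
    (∫ x in (-1:ℝ)..1, ∫ y in (-1:ℝ)..1, f x y)
      = ∫ x in (-1:ℝ)..1, ∫ y in (-1:ℝ)..1, g x y := by
  have hu : Set.uIcc (-1:ℝ) 1 = Set.Icc (-1:ℝ) 1 := Set.uIcc_of_le (by norm_num)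
  refine intervalIntegral.integral_congr fun x hx => ?_
  exact intervalIntegral.integral_congr fun y hy => h x (hu ▸ hx) y (hu ▸ hy)

noncomputable def cl (t : ℝ) : ℝ := max (-1) (min t 1)

lemma cl_mem (t : ℝ) : cl t ∈ Set.Icc (-1:ℝ) 1 :=
  ⟨le_max_left _ _, max_le (by norm_num) (min_le_right _ _)⟩

lemma cl_eq {t : ℝ} (h : t ∈ Set.Icc (-1:ℝ) 1) : cl t = t := by
  rw [cl, min_eq_left h.2, max_eq_right h.1]

lemma cl_cont : Continuous cl := continuous_const.max (continuous_id.min continuous_const)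

lemma cl_one : cl 1 = 1 := cl_eq (by norm_num)

lemma cl_neg_one : cl (-1) = -1 := cl_eq (by norm_num)

lemma key_identity {m : ℕ} (Pm Axm Aym Azm : Matrix (Fin m) (Fin m) ℝ)
    (hAx : Axm.IsSymm) (hAy : Aym.IsSymm) (hAz : Azm.IsSymm)
    (τ : ℝ) (V Vx Vy Vz G : ℝ → ℝ → ℝ → Fin m → ℂ)
    (hVc : Continuous fun q : ℝ × ℝ × ℝ => V q.1 q.2.1 q.2.2)
    (hVxc : Continuous fun q : ℝ × ℝ × ℝ => Vx q.1 q.2.1 q.2.2)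
    (hVyc : Continuous fun q : ℝ × ℝ × ℝ => Vy q.1 q.2.1 q.2.2)
    (hVzc : Continuous fun q : ℝ × ℝ × ℝ => Vz q.1 q.2.1 q.2.2)
    (hGc : Continuous fun q : ℝ × ℝ × ℝ => G q.1 q.2.1 q.2.2)
    (hDx : ∀ y z : ℝ, ∀ x ∈ Set.Icc (-1:ℝ) 1,
      HasDerivWithinAt (fun t => V t y z) (Vx x y z) (Set.Icc (-1:ℝ) 1) x)
    (hDy : ∀ x z : ℝ, ∀ y ∈ Set.Icc (-1:ℝ) 1,
      HasDerivWithinAt (fun t => V x t z) (Vy x y z) (Set.Icc (-1:ℝ) 1) y)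
    (hDz : ∀ x y : ℝ, ∀ z ∈ Set.Icc (-1:ℝ) 1,
      HasDerivWithinAt (fun t => V x y t) (Vz x y z) (Set.Icc (-1:ℝ) 1) z)
    (hpt : ∀ x y z : ℝ,
      τ * (star (V x y z) ⬝ᵥ (Pm.map Complex.ofReal).mulVec (V x y z)).re
        = (star (V x y z) ⬝ᵥ (Axm.map Complex.ofReal).mulVec (Vx x y z)).re
          + (star (V x y z) ⬝ᵥ (Aym.map Complex.ofReal).mulVec (Vy x y z)).re
          + (star (V x y z) ⬝ᵥ (Azm.map Complex.ofReal).mulVec (Vz x y z)).re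
          + (star (V x y z) ⬝ᵥ (Pm.map Complex.ofReal).mulVec (G x y z)).re) :
    τ * (∫ x in (-1:ℝ)..1, ∫ y in (-1:ℝ)..1, ∫ z in (-1:ℝ)..1,
        (star (V x y z) ⬝ᵥ (Pm.map Complex.ofReal).mulVec (V x y z)).re)
      = (1/2) * ((∫ y in (-1:ℝ)..1, ∫ z in (-1:ℝ)..1,
            ((star (V 1 y z) ⬝ᵥ (Axm.map Complex.ofReal).mulVec (V 1 y z)).re
              - (star (V (-1) y z) ⬝ᵥ (Axm.map Complex.ofReal).mulVec (V (-1) y z)).re))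
          + (∫ x in (-1:ℝ)..1, ∫ z in (-1:ℝ)..1,
            ((star (V x 1 z) ⬝ᵥ (Aym.map Complex.ofReal).mulVec (V x 1 z)).re
              - (star (V x (-1) z) ⬝ᵥ (Aym.map Complex.ofReal).mulVec (V x (-1) z)).re))
          + (∫ x in (-1:ℝ)..1, ∫ y in (-1:ℝ)..1,
            ((star (V x y 1) ⬝ᵥ (Azm.map Complex.ofReal).mulVec (V x y 1)).re
              - (star (V x y (-1)) ⬝ᵥ (Azm.map Complex.ofReal).mulVec (V x y (-1))).re)))
        + ∫ x in (-1:ℝ)..1, ∫ y in (-1:ℝ)..1, ∫ z in (-1:ℝ)..1,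
            (star (V x y z) ⬝ᵥ (Pm.map Complex.ofReal).mulVec (G x y z)).re := by
  have h1 : (-1:ℝ) ≤ 1 := by norm_num
  -- continuity of scalar fields
  have cVV : Continuous fun q : ℝ × ℝ × ℝ =>
      (star (V q.1 q.2.1 q.2.2) ⬝ᵥ (Pm.map Complex.ofReal).mulVec (V q.1 q.2.1 q.2.2)).re :=
    cont_quad Pm hVc hVc
  have cVAxVx : Continuous fun q : ℝ × ℝ × ℝ =>
      (star (V q.1 q.2.1 q.2.2) ⬝ᵥ (Axm.map Complex.ofReal).mulVec (Vx q.1 q.2.1 q.2.2)).re :=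
    cont_quad Axm hVc hVxc
  have cVAyVy : Continuous fun q : ℝ × ℝ × ℝ =>
      (star (V q.1 q.2.1 q.2.2) ⬝ᵥ (Aym.map Complex.ofReal).mulVec (Vy q.1 q.2.1 q.2.2)).re :=
    cont_quad Aym hVc hVyc
  have cVAzVz : Continuous fun q : ℝ × ℝ × ℝ =>
      (star (V q.1 q.2.1 q.2.2) ⬝ᵥ (Azm.map Complex.ofReal).mulVec (Vz q.1 q.2.1 q.2.2)).re :=
    cont_quad Azm hVc hVzc
  have cVG : Continuous fun q : ℝ × ℝ × ℝ =>
      (star (V q.1 q.2.1 q.2.2) ⬝ᵥ (Pm.map Complex.ofReal).mulVec (G q.1 q.2.1 q.2.2)).re :=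
    cont_quad Pm hVc hGc
  -- Step 1: rewrite the integrand
  have step1 : τ * (∫ x in (-1:ℝ)..1, ∫ y in (-1:ℝ)..1, ∫ z in (-1:ℝ)..1,
      (star (V x y z) ⬝ᵥ (Pm.map Complex.ofReal).mulVec (V x y z)).re)
      = (∫ x in (-1:ℝ)..1, ∫ y in (-1:ℝ)..1, ∫ z in (-1:ℝ)..1,
          (star (V x y z) ⬝ᵥ (Axm.map Complex.ofReal).mulVec (Vx x y z)).re)
        + ((∫ x in (-1:ℝ)..1, ∫ y in (-1:ℝ)..1, ∫ z in (-1:ℝ)..1,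
          (star (V x y z) ⬝ᵥ (Aym.map Complex.ofReal).mulVec (Vy x y z)).re)
        + ((∫ x in (-1:ℝ)..1, ∫ y in (-1:ℝ)..1, ∫ z in (-1:ℝ)..1,
          (star (V x y z) ⬝ᵥ (Azm.map Complex.ofReal).mulVec (Vz x y z)).re)
        + (∫ x in (-1:ℝ)..1, ∫ y in (-1:ℝ)..1, ∫ z in (-1:ℝ)..1,
          (star (V x y z) ⬝ᵥ (Pm.map Complex.ofReal).mulVec (G x y z)).re))) := by
    rw [← trip_smul]
    rw [trip_congr (g := fun x y z =>
      (star (V x y z) ⬝ᵥ (Axm.map Complex.ofReal).mulVec (Vx x y z)).re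
        + ((star (V x y z) ⬝ᵥ (Aym.map Complex.ofReal).mulVec (Vy x y z)).re
        + ((star (V x y z) ⬝ᵥ (Azm.map Complex.ofReal).mulVec (Vz x y z)).re
        + (star (V x y z) ⬝ᵥ (Pm.map Complex.ofReal).mulVec (G x y z)).re)))
      (fun x _ y _ z _ => by rw [hpt x y z]; ring)]
    rw [trip_add _ _ cVAxVx (by exact (cVAyVy.add (cVAzVz.add cVG)))]
    rw [trip_add _ _ cVAyVy (cVAzVz.add cVG)]
    rw [trip_add _ _ cVAzVz cVG]
  -- z-term via FTC innermost
  have ftcz : ∀ x y : ℝ, (∫ z in (-1:ℝ)..1,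
      2 * (star (V x y z) ⬝ᵥ (Azm.map Complex.ofReal).mulVec (Vz x y z)).re)
      = (star (V x y 1) ⬝ᵥ (Azm.map Complex.ofReal).mulVec (V x y 1)).re
        - (star (V x y (-1)) ⬝ᵥ (Azm.map Complex.ofReal).mulVec (V x y (-1))).re := by
    intro x y
    refine II_FTC (fun t => (star (V x y t) ⬝ᵥ (Azm.map Complex.ofReal).mulVec (V x y t)).re)
      _ (fun z hz => herm_deriv hAz (hDz x y z hz)) ?_
    exact continuous_const.mul (cVAzVz.comp
      (continuous_const.prodMk (continuous_const.prodMk continuous_id)))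
  have Iz : (∫ x in (-1:ℝ)..1, ∫ y in (-1:ℝ)..1, ∫ z in (-1:ℝ)..1,
      (star (V x y z) ⬝ᵥ (Azm.map Complex.ofReal).mulVec (Vz x y z)).re)
      = (1/2) * ∫ x in (-1:ℝ)..1, ∫ y in (-1:ℝ)..1,
          ((star (V x y 1) ⬝ᵥ (Azm.map Complex.ofReal).mulVec (V x y 1)).re
            - (star (V x y (-1)) ⬝ᵥ (Azm.map Complex.ofReal).mulVec (V x y (-1))).re) := by
    have h2 : (∫ x in (-1:ℝ)..1, ∫ y in (-1:ℝ)..1, ∫ z in (-1:ℝ)..1,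
        2 * (star (V x y z) ⬝ᵥ (Azm.map Complex.ofReal).mulVec (Vz x y z)).re)
        = ∫ x in (-1:ℝ)..1, ∫ y in (-1:ℝ)..1,
          ((star (V x y 1) ⬝ᵥ (Azm.map Complex.ofReal).mulVec (V x y 1)).re
            - (star (V x y (-1)) ⬝ᵥ (Azm.map Complex.ofReal).mulVec (V x y (-1))).re) :=
      intervalIntegral.integral_congr fun x _ =>
        intervalIntegral.integral_congr fun y _ => ftcz x y
    have h3 := trip_smul 2 (fun x y z =>
      (star (V x y z) ⬝ᵥ (Azm.map Complex.ofReal).mulVec (Vz x y z)).re)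
    rw [h3] at h2
    linarith
  -- y-term : swap inner two, then FTC
  have ftcy : ∀ x z : ℝ, (∫ y in (-1:ℝ)..1,
      2 * (star (V x y z) ⬝ᵥ (Aym.map Complex.ofReal).mulVec (Vy x y z)).re)
      = (star (V x 1 z) ⬝ᵥ (Aym.map Complex.ofReal).mulVec (V x 1 z)).re
        - (star (V x (-1) z) ⬝ᵥ (Aym.map Complex.ofReal).mulVec (V x (-1) z)).re := by
    intro x z
    refine II_FTC (fun t => (star (V x t z) ⬝ᵥ (Aym.map Complex.ofReal).mulVec (V x t z)).re)
      _ (fun y hy => herm_deriv hAy (hDy x z y hy)) ?_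
    exact continuous_const.mul (cVAyVy.comp
      (continuous_const.prodMk (continuous_id.prodMk continuous_const)))
  have Iy : (∫ x in (-1:ℝ)..1, ∫ y in (-1:ℝ)..1, ∫ z in (-1:ℝ)..1,
      (star (V x y z) ⬝ᵥ (Aym.map Complex.ofReal).mulVec (Vy x y z)).re)
      = (1/2) * ∫ x in (-1:ℝ)..1, ∫ z in (-1:ℝ)..1,
          ((star (V x 1 z) ⬝ᵥ (Aym.map Complex.ofReal).mulVec (V x 1 z)).re
            - (star (V x (-1) z) ⬝ᵥ (Aym.map Complex.ofReal).mulVec (V x (-1) z)).re) := by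
    have h2 : (∫ x in (-1:ℝ)..1, ∫ y in (-1:ℝ)..1, ∫ z in (-1:ℝ)..1,
        2 * (star (V x y z) ⬝ᵥ (Aym.map Complex.ofReal).mulVec (Vy x y z)).re)
        = ∫ x in (-1:ℝ)..1, ∫ z in (-1:ℝ)..1,
          ((star (V x 1 z) ⬝ᵥ (Aym.map Complex.ofReal).mulVec (V x 1 z)).re
            - (star (V x (-1) z) ⬝ᵥ (Aym.map Complex.ofReal).mulVec (V x (-1) z)).re) := by
      refine intervalIntegral.integral_congr fun x _ => ?_
      have hswap := II_swap (fun y z =>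
          2 * (star (V x y z) ⬝ᵥ (Aym.map Complex.ofReal).mulVec (Vy x y z)).re)
        (continuous_const.mul (cVAyVy.comp
          (continuous_const.prodMk (continuous_fst.prodMk continuous_snd))))
      rw [hswap]
      exact intervalIntegral.integral_congr fun z _ => ftcy x z
    have h3 := trip_smul 2 (fun x y z =>
      (star (V x y z) ⬝ᵥ (Aym.map Complex.ofReal).mulVec (Vy x y z)).re)
    rw [h3] at h2
    linarith
  -- x-term : two swaps, then FTC
  have ftcx : ∀ y z : ℝ, (∫ x in (-1:ℝ)..1,
      2 * (star (V x y z) ⬝ᵥ (Axm.map Complex.ofReal).mulVec (Vx x y z)).re)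
      = (star (V 1 y z) ⬝ᵥ (Axm.map Complex.ofReal).mulVec (V 1 y z)).re
        - (star (V (-1) y z) ⬝ᵥ (Axm.map Complex.ofReal).mulVec (V (-1) y z)).re := by
    intro y z
    refine II_FTC (fun t => (star (V t y z) ⬝ᵥ (Axm.map Complex.ofReal).mulVec (V t y z)).re)
      _ (fun x hx => herm_deriv hAx (hDx y z x hx)) ?_
    exact continuous_const.mul (cVAxVx.comp
      (continuous_id.prodMk (continuous_const.prodMk continuous_const)))
  have Ix : (∫ x in (-1:ℝ)..1, ∫ y in (-1:ℝ)..1, ∫ z in (-1:ℝ)..1,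
      (star (V x y z) ⬝ᵥ (Axm.map Complex.ofReal).mulVec (Vx x y z)).re)
      = (1/2) * ∫ y in (-1:ℝ)..1, ∫ z in (-1:ℝ)..1,
          ((star (V 1 y z) ⬝ᵥ (Axm.map Complex.ofReal).mulVec (V 1 y z)).re
            - (star (V (-1) y z) ⬝ᵥ (Axm.map Complex.ofReal).mulVec (V (-1) y z)).re) := by
    have h2 : (∫ x in (-1:ℝ)..1, ∫ y in (-1:ℝ)..1, ∫ z in (-1:ℝ)..1,
        2 * (star (V x y z) ⬝ᵥ (Axm.map Complex.ofReal).mulVec (Vx x y z)).re)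
        = ∫ y in (-1:ℝ)..1, ∫ z in (-1:ℝ)..1,
          ((star (V 1 y z) ⬝ᵥ (Axm.map Complex.ofReal).mulVec (V 1 y z)).re
            - (star (V (-1) y z) ⬝ᵥ (Axm.map Complex.ofReal).mulVec (V (-1) y z)).re) := by
      have contW : Continuous fun q : ℝ × ℝ × ℝ =>
          2 * (star (V q.1 q.2.1 q.2.2) ⬝ᵥ (Axm.map Complex.ofReal).mulVec
            (Vx q.1 q.2.1 q.2.2)).re := continuous_const.mul cVAxVx
      have hswap1 := II_swap (fun x y => ∫ z in (-1:ℝ)..1,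
          2 * (star (V x y z) ⬝ᵥ (Axm.map Complex.ofReal).mulVec (Vx x y z)).re)
        (cont_param2 (fun x y z =>
          2 * (star (V x y z) ⬝ᵥ (Axm.map Complex.ofReal).mulVec (Vx x y z)).re) contW)
      rw [hswap1]
      refine intervalIntegral.integral_congr fun y _ => ?_
      have hswap2 := II_swap (fun x z =>
          2 * (star (V x y z) ⬝ᵥ (Axm.map Complex.ofReal).mulVec (Vx x y z)).re)
        (contW.comp (continuous_fst.prodMk (continuous_const.prodMk continuous_snd)))
      rw [hswap2]
      exact intervalIntegral.integral_congr fun z _ => ftcx y z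
    have h3 := trip_smul 2 (fun x y z =>
      (star (V x y z) ⬝ᵥ (Axm.map Complex.ofReal).mulVec (Vx x y z)).re)
    rw [h3] at h2
    linarith
  rw [step1, Ix, Iy, Iz]
  ring
set_option maxHeartbeats 3000000 in
/-- 3D PML corner energy estimate in Laplace space: if
`(sS)P⁻¹Ũ = Σ_{ξ=x,y,z} A_ξ ∂Ũ/∂ξ + P⁻¹F̃` on `[−1,1]³` with `S = γ(1 + d/(s+α))`,
`s = a+ib`, `a > 0`, then `Re(sS) ≥ aγ > 0` and
`Re(sS)‖Ũ‖_P² ≤ ‖Ũ‖_P‖F̃‖_P + BT`. -/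
theorem pml_corner_energy_estimate (m : ℕ) (P Ax Ay Az : Matrix (Fin m) (Fin m) ℝ)
    (hP : P.PosDef) (hPs : P.IsSymm)
    (hAx : Ax.IsSymm) (hAy : Ay.IsSymm) (hAz : Az.IsSymm)
    (d α γ a b : ℝ) (hd : 0 ≤ d) (hα : 0 ≤ α) (hγ : 0 < γ) (ha : 0 < a)
    (s S : ℂ) (hs : s = (a : ℂ) + (b : ℂ) * Complex.I)
    (hS : S = (γ : ℂ) * (1 + (d : ℂ) / (s + (α : ℂ))))
    (U Ux Uy Uz F : ℝ → ℝ → ℝ → Fin m → ℂ)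
    (hUx : ∀ x ∈ Set.Icc (-1 : ℝ) 1, ∀ y ∈ Set.Icc (-1 : ℝ) 1, ∀ z ∈ Set.Icc (-1 : ℝ) 1,
      HasDerivWithinAt (fun t => U t y z) (Ux x y z) (Set.Icc (-1 : ℝ) 1) x)
    (hUy : ∀ x ∈ Set.Icc (-1 : ℝ) 1, ∀ y ∈ Set.Icc (-1 : ℝ) 1, ∀ z ∈ Set.Icc (-1 : ℝ) 1,
      HasDerivWithinAt (fun t => U x t z) (Uy x y z) (Set.Icc (-1 : ℝ) 1) y)
    (hUz : ∀ x ∈ Set.Icc (-1 : ℝ) 1, ∀ y ∈ Set.Icc (-1 : ℝ) 1, ∀ z ∈ Set.Icc (-1 : ℝ) 1,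
      HasDerivWithinAt (fun t => U x y t) (Uz x y z) (Set.Icc (-1 : ℝ) 1) z)
    (hUxc : ContinuousOn (fun p : ℝ × ℝ × ℝ => Ux p.1 p.2.1 p.2.2)
      (Set.Icc (-1 : ℝ) 1 ×ˢ Set.Icc (-1 : ℝ) 1 ×ˢ Set.Icc (-1 : ℝ) 1))
    (hUyc : ContinuousOn (fun p : ℝ × ℝ × ℝ => Uy p.1 p.2.1 p.2.2)
      (Set.Icc (-1 : ℝ) 1 ×ˢ Set.Icc (-1 : ℝ) 1 ×ˢ Set.Icc (-1 : ℝ) 1))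
    (hUzc : ContinuousOn (fun p : ℝ × ℝ × ℝ => Uz p.1 p.2.1 p.2.2)
      (Set.Icc (-1 : ℝ) 1 ×ˢ Set.Icc (-1 : ℝ) 1 ×ˢ Set.Icc (-1 : ℝ) 1))
    (hFc : ContinuousOn (fun p : ℝ × ℝ × ℝ => F p.1 p.2.1 p.2.2)
      (Set.Icc (-1 : ℝ) 1 ×ˢ Set.Icc (-1 : ℝ) 1 ×ˢ Set.Icc (-1 : ℝ) 1))
    (heq : ∀ x ∈ Set.Icc (-1 : ℝ) 1, ∀ y ∈ Set.Icc (-1 : ℝ) 1, ∀ z ∈ Set.Icc (-1 : ℝ) 1,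
      (s * S) • ((P⁻¹.map Complex.ofReal).mulVec (U x y z)) =
        (Ax.map Complex.ofReal).mulVec (Ux x y z) +
          (Ay.map Complex.ofReal).mulVec (Uy x y z) +
          (Az.map Complex.ofReal).mulVec (Uz x y z) +
          (P⁻¹.map Complex.ofReal).mulVec (F x y z))
    (normP : (ℝ → ℝ → ℝ → Fin m → ℂ) → ℝ)
    (hnorm : ∀ G : ℝ → ℝ → ℝ → Fin m → ℂ, normP G = Real.sqrt (∫ x in (-1 : ℝ)..1,
      ∫ y in (-1 : ℝ)..1, ∫ z in (-1 : ℝ)..1,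
        (1 / 2) * ((star (G x y z)) ⬝ᵥ ((P⁻¹.map Complex.ofReal).mulVec (G x y z))).re))
    (BT : ℝ)
    (hBT : BT = (1 / 4) *
      ((∫ y in (-1 : ℝ)..1, ∫ z in (-1 : ℝ)..1,
          (((star (U 1 y z)) ⬝ᵥ ((Ax.map Complex.ofReal).mulVec (U 1 y z))).re -
            ((star (U (-1) y z)) ⬝ᵥ ((Ax.map Complex.ofReal).mulVec (U (-1) y z))).re)) +
        (∫ x in (-1 : ℝ)..1, ∫ z in (-1 : ℝ)..1,
          (((star (U x 1 z)) ⬝ᵥ ((Ay.map Complex.ofReal).mulVec (U x 1 z))).re -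
            ((star (U x (-1) z)) ⬝ᵥ ((Ay.map Complex.ofReal).mulVec (U x (-1) z))).re)) +
        (∫ x in (-1 : ℝ)..1, ∫ y in (-1 : ℝ)..1,
          (((star (U x y 1)) ⬝ᵥ ((Az.map Complex.ofReal).mulVec (U x y 1))).re -
            ((star (U x y (-1))) ⬝ᵥ ((Az.map Complex.ofReal).mulVec (U x y (-1)))).re)))) :
    a * γ ≤ (s * S).re ∧ 0 < a * γ ∧
      (s * S).re * (normP U) ^ 2 ≤ normP U * normP F + BT := by
  have h1 : (-1:ℝ) ≤ 1 := by norm_num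
  set τ : ℝ := (s * S).re with hτ
  -- Part 1 : aγ ≤ Re (sS)
  have part1 : a * γ ≤ τ := by
    have hw : s + (α:ℂ) = Complex.ofReal (a+α) + Complex.ofReal b * Complex.I := by
      rw [hs]; push_cast; ring
    have h1' : s * S = (γ:ℂ) * s + (γ:ℂ) * (d:ℂ) * (s / (s + α)) := by rw [hS]; ring
    have h2 : (s / (s + (α:ℂ))).re = (a*(a+α) + b*b) / Complex.normSq (s + (α:ℂ)) := by
      rw [Complex.div_re, hw, hs]; simp; try ring
    have h3 : 0 ≤ (s / (s + (α:ℂ))).re := by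
      rw [h2]; apply div_nonneg (by nlinarith) (Complex.normSq_nonneg _)
    have h4 : τ = γ * a + γ * d * (s / (s + (α:ℂ))).re := by
      rw [hτ, h1']; simp [Complex.add_re, Complex.mul_re, hs]; try ring
    rw [h4]
    nlinarith [mul_nonneg (mul_nonneg hγ.le hd) h3]
  have hτpos : 0 < τ := lt_of_lt_of_le (by positivity) part1
  have hsS : s * S ≠ 0 := fun h => by simp [hτ, h] at hτpos
  -- matrix facts
  have hQs : (P⁻¹).IsSymm := by
    rw [Matrix.IsSymm, Matrix.transpose_nonsing_inv, hPs.eq]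
  have hq : ∀ x : Fin m → ℝ, 0 ≤ x ⬝ᵥ P⁻¹.mulVec x := by
    intro x
    simpa using hP.inv.posSemidef.re_dotProduct_nonneg x
  have hPQ : (P.map Complex.ofReal) * (P⁻¹.map Complex.ofReal) = 1 := by
    have h0 : (Complex.ofReal : ℝ → ℂ) = ⇑Complex.ofRealHom := rfl
    rw [h0, ← Matrix.map_mul, Matrix.mul_nonsing_inv _
      ((Matrix.isUnit_iff_isUnit_det _).mp hP.isUnit)]
    exact Matrix.map_one _ Complex.ofReal_zero Complex.ofReal_one
  -- clamped functions
  set V : ℝ → ℝ → ℝ → Fin m → ℂ := fun x y z => U (cl x) (cl y) (cl z) with hV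
  set Wx : ℝ → ℝ → ℝ → Fin m → ℂ := fun x y z => Ux (cl x) (cl y) (cl z) with hWx
  set Wy : ℝ → ℝ → ℝ → Fin m → ℂ := fun x y z => Uy (cl x) (cl y) (cl z) with hWy
  set Wz : ℝ → ℝ → ℝ → Fin m → ℂ := fun x y z => Uz (cl x) (cl y) (cl z) with hWz
  set G : ℝ → ℝ → ℝ → Fin m → ℂ := fun x y z => F (cl x) (cl y) (cl z) with hG
  have hclq : Continuous fun q : ℝ × ℝ × ℝ => ((cl q.1, cl q.2.1, cl q.2.2) : ℝ × ℝ × ℝ) :=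
    (cl_cont.comp continuous_fst).prodMk
      ((cl_cont.comp (continuous_fst.comp continuous_snd)).prodMk
        (cl_cont.comp (continuous_snd.comp continuous_snd)))
  have hmem : ∀ q : ℝ × ℝ × ℝ, ((cl q.1, cl q.2.1, cl q.2.2) : ℝ × ℝ × ℝ)
      ∈ (Set.Icc (-1 : ℝ) 1 ×ˢ Set.Icc (-1 : ℝ) 1 ×ˢ Set.Icc (-1 : ℝ) 1) :=
    fun q => ⟨cl_mem _, cl_mem _, cl_mem _⟩
  have hWxc : Continuous fun q : ℝ × ℝ × ℝ => Wx q.1 q.2.1 q.2.2 :=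
    hUxc.comp_continuous hclq hmem
  have hWyc : Continuous fun q : ℝ × ℝ × ℝ => Wy q.1 q.2.1 q.2.2 :=
    hUyc.comp_continuous hclq hmem
  have hWzc : Continuous fun q : ℝ × ℝ × ℝ => Wz q.1 q.2.1 q.2.2 :=
    hUzc.comp_continuous hclq hmem
  have hGc : Continuous fun q : ℝ × ℝ × ℝ => G q.1 q.2.1 q.2.2 :=
    hFc.comp_continuous hclq hmem
  have heq' : ∀ x y z : ℝ,
      (s * S) • ((P⁻¹.map Complex.ofReal).mulVec (V x y z)) =
        (Ax.map Complex.ofReal).mulVec (Wx x y z) +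
          (Ay.map Complex.ofReal).mulVec (Wy x y z) +
          (Az.map Complex.ofReal).mulVec (Wz x y z) +
          (P⁻¹.map Complex.ofReal).mulVec (G x y z) :=
    fun x y z => heq (cl x) (cl_mem x) (cl y) (cl_mem y) (cl z) (cl_mem z)
  have hVeq : ∀ x y z : ℝ, V x y z = (s * S)⁻¹ • (P.map Complex.ofReal).mulVec
      ((Ax.map Complex.ofReal).mulVec (Wx x y z) +
        (Ay.map Complex.ofReal).mulVec (Wy x y z) +
        (Az.map Complex.ofReal).mulVec (Wz x y z) +
        (P⁻¹.map Complex.ofReal).mulVec (G x y z)) := by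
    intro x y z
    have h5 := congrArg (fun v => (P.map Complex.ofReal).mulVec v) (heq' x y z)
    simp only [Matrix.mulVec_smul, Matrix.mulVec_mulVec, hPQ, Matrix.one_mulVec] at h5
    have h6 := congrArg (fun v => (s * S)⁻¹ • v) h5
    rwa [inv_smul_smul₀ hsS] at h6
  have hVc : Continuous fun q : ℝ × ℝ × ℝ => V q.1 q.2.1 q.2.2 := by
    have : (fun q : ℝ × ℝ × ℝ => V q.1 q.2.1 q.2.2)
        = fun q : ℝ × ℝ × ℝ => (s * S)⁻¹ • (P.map Complex.ofReal).mulVec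
          ((Ax.map Complex.ofReal).mulVec (Wx q.1 q.2.1 q.2.2) +
            (Ay.map Complex.ofReal).mulVec (Wy q.1 q.2.1 q.2.2) +
            (Az.map Complex.ofReal).mulVec (Wz q.1 q.2.1 q.2.2) +
            (P⁻¹.map Complex.ofReal).mulVec (G q.1 q.2.1 q.2.2)) := by
      funext q; exact hVeq q.1 q.2.1 q.2.2
    rw [this]
    exact (cont_mulVec _ ((((cont_mulVec _ hWxc).add (cont_mulVec _ hWyc)).add
      (cont_mulVec _ hWzc)).add (cont_mulVec _ hGc))).const_smul ((s * S)⁻¹)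
  -- derivatives of the clamped function
  have hDx : ∀ y z : ℝ, ∀ x ∈ Set.Icc (-1:ℝ) 1,
      HasDerivWithinAt (fun t => V t y z) (Wx x y z) (Set.Icc (-1:ℝ) 1) x := by
    intro y z x hx
    have h0 := hUx x hx (cl y) (cl_mem y) (cl z) (cl_mem z)
    show HasDerivWithinAt (fun t => U (cl t) (cl y) (cl z)) (Ux (cl x) (cl y) (cl z)) _ x
    rw [cl_eq hx]
    exact h0.congr (fun t ht => by rw [cl_eq ht]) (by rw [cl_eq hx])
  have hDy : ∀ x z : ℝ, ∀ y ∈ Set.Icc (-1:ℝ) 1,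
      HasDerivWithinAt (fun t => V x t z) (Wy x y z) (Set.Icc (-1:ℝ) 1) y := by
    intro x z y hy
    have h0 := hUy (cl x) (cl_mem x) y hy (cl z) (cl_mem z)
    show HasDerivWithinAt (fun t => U (cl x) (cl t) (cl z)) (Uy (cl x) (cl y) (cl z)) _ y
    rw [cl_eq hy]
    exact h0.congr (fun t ht => by rw [cl_eq ht]) (by rw [cl_eq hy])
  have hDz : ∀ x y : ℝ, ∀ z ∈ Set.Icc (-1:ℝ) 1,
      HasDerivWithinAt (fun t => V x y t) (Wz x y z) (Set.Icc (-1:ℝ) 1) z := by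
    intro x y z hz
    have h0 := hUz (cl x) (cl_mem x) (cl y) (cl_mem y) z hz
    show HasDerivWithinAt (fun t => U (cl x) (cl y) (cl t)) (Uz (cl x) (cl y) (cl z)) _ z
    rw [cl_eq hz]
    exact h0.congr (fun t ht => by rw [cl_eq ht]) (by rw [cl_eq hz])
  -- pointwise energy identity
  have hpt : ∀ x y z : ℝ,
      τ * (star (V x y z) ⬝ᵥ (P⁻¹.map Complex.ofReal).mulVec (V x y z)).re
        = (star (V x y z) ⬝ᵥ (Ax.map Complex.ofReal).mulVec (Wx x y z)).re
          + (star (V x y z) ⬝ᵥ (Ay.map Complex.ofReal).mulVec (Wy x y z)).re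
          + (star (V x y z) ⬝ᵥ (Az.map Complex.ofReal).mulVec (Wz x y z)).re
          + (star (V x y z) ⬝ᵥ (P⁻¹.map Complex.ofReal).mulVec (G x y z)).re := by
    intro x y z
    have h5 := congrArg (fun w => (star (V x y z) ⬝ᵥ w).re) (heq' x y z)
    simp only [dotProduct_smul, smul_eq_mul, dotProduct_add, Complex.add_re,
      Complex.mul_re] at h5
    have him : (star (V x y z) ⬝ᵥ (P⁻¹.map Complex.ofReal).mulVec (V x y z)).im = 0 := by
      rw [quad_im, symm_swap hQs]; ring
    rw [him] at h5
    simpa [hτ] using h5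
  have key := key_identity P⁻¹ Ax Ay Az hAx hAy hAz τ V Wx Wy Wz G
    hVc hWxc hWyc hWzc hGc hDx hDy hDz hpt
  -- nonnegativity of quadratic fields
  have eNN : ∀ x y z : ℝ, 0 ≤ (star (V x y z) ⬝ᵥ (P⁻¹.map Complex.ofReal).mulVec (V x y z)).re := fun x y z => herm_nonneg hq _
  have eFNN : ∀ x y z : ℝ, 0 ≤ (star (G x y z) ⬝ᵥ (P⁻¹.map Complex.ofReal).mulVec (G x y z)).re := fun x y z => herm_nonneg hq _
  have cVV : Continuous fun q : ℝ × ℝ × ℝ =>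
      (star (V q.1 q.2.1 q.2.2) ⬝ᵥ (P⁻¹.map Complex.ofReal).mulVec (V q.1 q.2.1 q.2.2)).re := cont_quad P⁻¹ hVc hVc
  have cGG : Continuous fun q : ℝ × ℝ × ℝ =>
      (star (G q.1 q.2.1 q.2.2) ⬝ᵥ (P⁻¹.map Complex.ofReal).mulVec (G q.1 q.2.1 q.2.2)).re := cont_quad P⁻¹ hGc hGc
  have cVG : Continuous fun q : ℝ × ℝ × ℝ =>
      (star (V q.1 q.2.1 q.2.2) ⬝ᵥ (P⁻¹.map Complex.ofReal).mulVec (G q.1 q.2.1 q.2.2)).re := cont_quad P⁻¹ hVc hGc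
  have hE0 : 0 ≤ (∫ x in (-1:ℝ)..1, ∫ y in (-1:ℝ)..1, ∫ z in (-1:ℝ)..1, (star (V x y z) ⬝ᵥ (P⁻¹.map Complex.ofReal).mulVec (V x y z)).re) := trip_nonneg _ eNN
  have hEF0 : 0 ≤ (∫ x in (-1:ℝ)..1, ∫ y in (-1:ℝ)..1, ∫ z in (-1:ℝ)..1, (star (G x y z) ⬝ᵥ (P⁻¹.map Complex.ofReal).mulVec (G x y z)).re) := trip_nonneg _ eFNN
  -- norms
  have hNU : normP U = Real.sqrt ((1/2) * (∫ x in (-1:ℝ)..1, ∫ y in (-1:ℝ)..1, ∫ z in (-1:ℝ)..1, (star (V x y z) ⬝ᵥ (P⁻¹.map Complex.ofReal).mulVec (V x y z)).re)) := by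
    rw [hnorm U, ← trip_smul]
    congr 1
    exact trip_congr fun x hx y hy z hz => by
      simp only [hV, cl_eq hx, cl_eq hy, cl_eq hz]
  have hNF : normP F = Real.sqrt ((1/2) * (∫ x in (-1:ℝ)..1, ∫ y in (-1:ℝ)..1, ∫ z in (-1:ℝ)..1, (star (G x y z) ⬝ᵥ (P⁻¹.map Complex.ofReal).mulVec (G x y z)).re)) := by
    rw [hnorm F, ← trip_smul]
    congr 1
    exact trip_congr fun x hx y hy z hz => by
      simp only [hG, cl_eq hx, cl_eq hy, cl_eq hz]
  have hNU2 : normP U ^ 2 = (1/2) * (∫ x in (-1:ℝ)..1, ∫ y in (-1:ℝ)..1, ∫ z in (-1:ℝ)..1, (star (V x y z) ⬝ᵥ (P⁻¹.map Complex.ofReal).mulVec (V x y z)).re) := by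
    rw [hNU]; exact Real.sq_sqrt (by nlinarith)
  -- Cauchy-Schwarz bound on the forcing term
  have ptCS : ∀ x y z : ℝ, (1/2) * (star (V x y z) ⬝ᵥ (P⁻¹.map Complex.ofReal).mulVec (G x y z)).re
      ≤ Real.sqrt ((1/2) * (star (V x y z) ⬝ᵥ (P⁻¹.map Complex.ofReal).mulVec (V x y z)).re) * Real.sqrt ((1/2) * (star (G x y z) ⬝ᵥ (P⁻¹.map Complex.ofReal).mulVec (G x y z)).re) := by
    intro x y z
    have hcs := herm_CS hQs hq (V x y z) (G x y z)
    have hhalf : Real.sqrt ((1/2) * (star (V x y z) ⬝ᵥ (P⁻¹.map Complex.ofReal).mulVec (V x y z)).re) * Real.sqrt ((1/2) * (star (G x y z) ⬝ᵥ (P⁻¹.map Complex.ofReal).mulVec (G x y z)).re)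
        = (1/2) * (Real.sqrt (star (V x y z) ⬝ᵥ (P⁻¹.map Complex.ofReal).mulVec (V x y z)).re * Real.sqrt (star (G x y z) ⬝ᵥ (P⁻¹.map Complex.ofReal).mulVec (G x y z)).re) := by
      rw [Real.sqrt_mul (by norm_num : (0:ℝ) ≤ 1/2),
        Real.sqrt_mul (by norm_num : (0:ℝ) ≤ 1/2)]
      have hss : Real.sqrt (1/2) * Real.sqrt (1/2) = 1/2 :=
        Real.mul_self_sqrt (by norm_num)
      have hre : ∀ A B : ℝ, Real.sqrt (1/2) * A * (Real.sqrt (1/2) * B)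
          = (Real.sqrt (1/2) * Real.sqrt (1/2)) * (A * B) := fun A B => by ring
      rw [hre, hss]
    rw [hhalf]
    linarith
  have monoCS := trip_mono (fun x y z => (1/2) * (star (V x y z) ⬝ᵥ (P⁻¹.map Complex.ofReal).mulVec (G x y z)).re)
    (fun x y z => Real.sqrt ((1/2) * (star (V x y z) ⬝ᵥ (P⁻¹.map Complex.ofReal).mulVec (V x y z)).re) * Real.sqrt ((1/2) * (star (G x y z) ⬝ᵥ (P⁻¹.map Complex.ofReal).mulVec (G x y z)).re))
    (continuous_const.mul cVG)
    (((continuous_const.mul cVV).sqrt).mul ((continuous_const.mul cGG).sqrt))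
    ptCS
  have tcs := trip_CS (fun x y z => Real.sqrt ((1/2) * (star (V x y z) ⬝ᵥ (P⁻¹.map Complex.ofReal).mulVec (V x y z)).re))
    (fun x y z => Real.sqrt ((1/2) * (star (G x y z) ⬝ᵥ (P⁻¹.map Complex.ofReal).mulVec (G x y z)).re))
    ((continuous_const.mul cVV).sqrt) ((continuous_const.mul cGG).sqrt)
    (fun x y z => Real.sqrt_nonneg _) (fun x y z => Real.sqrt_nonneg _)
  have hsqV : (∫ x in (-1:ℝ)..1, ∫ y in (-1:ℝ)..1, ∫ z in (-1:ℝ)..1, (Real.sqrt ((1/2) * (star (V x y z) ⬝ᵥ (P⁻¹.map Complex.ofReal).mulVec (V x y z)).re)) ^ 2) = (1/2) * (∫ x in (-1:ℝ)..1, ∫ y in (-1:ℝ)..1, ∫ z in (-1:ℝ)..1, (star (V x y z) ⬝ᵥ (P⁻¹.map Complex.ofReal).mulVec (V x y z)).re) := by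
    rw [← trip_smul]
    exact trip_congr fun x hx y hy z hz =>
      Real.sq_sqrt (by nlinarith [eNN x y z])
  have hsqG : (∫ x in (-1:ℝ)..1, ∫ y in (-1:ℝ)..1, ∫ z in (-1:ℝ)..1, (Real.sqrt ((1/2) * (star (G x y z) ⬝ᵥ (P⁻¹.map Complex.ofReal).mulVec (G x y z)).re)) ^ 2) = (1/2) * (∫ x in (-1:ℝ)..1, ∫ y in (-1:ℝ)..1, ∫ z in (-1:ℝ)..1, (star (G x y z) ⬝ᵥ (P⁻¹.map Complex.ofReal).mulVec (G x y z)).re) := by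
    rw [← trip_smul]
    exact trip_congr fun x hx y hy z hz =>
      Real.sq_sqrt (by nlinarith [eFNN x y z])
  rw [hsqV, hsqG] at tcs
  have hhalfR : (∫ x in (-1:ℝ)..1, ∫ y in (-1:ℝ)..1, ∫ z in (-1:ℝ)..1, (1/2) * (star (V x y z) ⬝ᵥ (P⁻¹.map Complex.ofReal).mulVec (G x y z)).re) = (1/2) * (∫ x in (-1:ℝ)..1, ∫ y in (-1:ℝ)..1, ∫ z in (-1:ℝ)..1, (star (V x y z) ⬝ᵥ (P⁻¹.map Complex.ofReal).mulVec (G x y z)).re) := trip_smul _ _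
  have halfRbound : (1/2) * (∫ x in (-1:ℝ)..1, ∫ y in (-1:ℝ)..1, ∫ z in (-1:ℝ)..1, (star (V x y z) ⬝ᵥ (P⁻¹.map Complex.ofReal).mulVec (G x y z)).re) ≤ normP U * normP F := by
    rw [hNU, hNF, ← hhalfR]
    exact le_trans monoCS tcs
  -- boundary term conversion
  have hBx : (∫ y in (-1:ℝ)..1, ∫ z in (-1:ℝ)..1,
      ((star (V 1 y z) ⬝ᵥ (Ax.map Complex.ofReal).mulVec (V 1 y z)).re
        - (star (V (-1) y z) ⬝ᵥ (Ax.map Complex.ofReal).mulVec (V (-1) y z)).re))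
      = ∫ y in (-1:ℝ)..1, ∫ z in (-1:ℝ)..1,
        (((star (U 1 y z)) ⬝ᵥ ((Ax.map Complex.ofReal).mulVec (U 1 y z))).re -
          ((star (U (-1) y z)) ⬝ᵥ ((Ax.map Complex.ofReal).mulVec (U (-1) y z))).re) :=
    dbl_congr fun y hy z hz => by
      simp only [hV, cl_eq hy, cl_eq hz, cl_one, cl_neg_one]
  have hBy : (∫ x in (-1:ℝ)..1, ∫ z in (-1:ℝ)..1,
      ((star (V x 1 z) ⬝ᵥ (Ay.map Complex.ofReal).mulVec (V x 1 z)).re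
        - (star (V x (-1) z) ⬝ᵥ (Ay.map Complex.ofReal).mulVec (V x (-1) z)).re))
      = ∫ x in (-1:ℝ)..1, ∫ z in (-1:ℝ)..1,
        (((star (U x 1 z)) ⬝ᵥ ((Ay.map Complex.ofReal).mulVec (U x 1 z))).re -
          ((star (U x (-1) z)) ⬝ᵥ ((Ay.map Complex.ofReal).mulVec (U x (-1) z))).re) :=
    dbl_congr fun x hx z hz => by
      simp only [hV, cl_eq hx, cl_eq hz, cl_one, cl_neg_one]
  have hBz : (∫ x in (-1:ℝ)..1, ∫ y in (-1:ℝ)..1,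
      ((star (V x y 1) ⬝ᵥ (Az.map Complex.ofReal).mulVec (V x y 1)).re
        - (star (V x y (-1)) ⬝ᵥ (Az.map Complex.ofReal).mulVec (V x y (-1))).re))
      = ∫ x in (-1:ℝ)..1, ∫ y in (-1:ℝ)..1,
        (((star (U x y 1)) ⬝ᵥ ((Az.map Complex.ofReal).mulVec (U x y 1))).re -
          ((star (U x y (-1))) ⬝ᵥ ((Az.map Complex.ofReal).mulVec (U x y (-1)))).re) :=
    dbl_congr fun x hx y hy => by
      simp only [hV, cl_eq hx, cl_eq hy, cl_one, cl_neg_one]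
  rw [hBx, hBy, hBz] at key
  refine ⟨part1, by positivity, ?_⟩
  rw [hNU2]
  nlinarith [key, halfRbound, hBT]
end

section
/- (Laplace-space energy estimate for the acoustic PML, 1D constant-coefficient reduction.) Let ρ, κ > 0, c = √(κ/ρ), Z = ρc, let d ≥ 0 be constant, let s = a + ib ∈ ℂ with a > 0, and S = 1 + d/s. Let p̃ : [−1,1] → ℂ be twice continuously differentiable and F̂ : [−1,1] → ℂ continuous, f̂ : [−1,1] → ℂ continuously differentiable, satisfying (s²/κ)·p̃ − (1/S)·d/dx( (1/(ρS))·p̃′ ) = (s/κ)·F̂ − (1/S)·f̂′ on [−1,1], together with the boundary conditions ((1+r₋)/(2Z))·s·p̃(−1) − ((1−r₋)/2)·(1/S)·p̃′(−1) = 0 and ((1+r₊)/(2Z))·s·p̃(1) + ((1−r₊)/2)·(1/S)·p̃′(1) = 0 with |r₋| < 1 and |r₊| < 1. Define the weighted norms ‖g‖_w² = ∫_{−1}^{1} w·|g(x)|² dx, the energies Ẽ_p² = ‖s·p̃‖²_{1/κ} + ‖(1/S)·p̃′‖²_{1/ρ} and Ẽ_f² = ‖s·F̂‖²_{1/κ}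 + ‖(1/S)·f̂′‖²_{κ}, the quantity ε = Re(conj(sS)/S) − a ≥ 0, and the boundary term BT = Re[ (conj(s)/(ρS²))·( conj(p̃(−1))·p̃′(−1) − conj(p̃(1))·p̃′(1) ) ]. Then BT ≥ 0 and a·Ẽ_p² + ε·‖(1/S)·p̃′‖²_{1/ρ} + BT ≤ 2·Ẽ_p·Ẽ_f. -/
open MeasureTheory Set intervalIntegral Complex

private lemma pml_cs_helper (u v : ℝ → ℝ)
    (hu : IntervalIntegrable (fun x => u x ^ 2) volume (-1) 1)
    (hv : IntervalIntegrable (fun x => v x ^ 2) volume (-1) 1)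
    (huv : IntervalIntegrable (fun x => u x * v x) volume (-1) 1) :
    (∫ x in (-1:ℝ)..1, u x * v x) ≤
      Real.sqrt (∫ x in (-1:ℝ)..1, u x ^ 2) * Real.sqrt (∫ x in (-1:ℝ)..1, v x ^ 2) := by
  set A := ∫ x in (-1:ℝ)..1, u x ^ 2 with hA
  set B := ∫ x in (-1:ℝ)..1, v x ^ 2 with hB
  set C := ∫ x in (-1:ℝ)..1, u x * v x with hC
  have hA0 : 0 ≤ A := integral_nonneg (by norm_num) (fun x _ => sq_nonneg _)
  have key : ∀ t : ℝ, 0 ≤ B * (t * t) + (2 * C) * t + A := by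
    intro t
    have h1 : ∀ x : ℝ, (u x + t * v x) ^ 2
        = t ^ 2 * v x ^ 2 + (2 * t) * (u x * v x) + u x ^ 2 := by intro x; ring
    have h2 : (0:ℝ) ≤ ∫ x in (-1:ℝ)..1, (u x + t * v x) ^ 2 :=
      integral_nonneg (by norm_num) (fun x _ => sq_nonneg _)
    have h3 : (∫ x in (-1:ℝ)..1, (u x + t * v x) ^ 2)
        = t ^ 2 * B + (2 * t) * C + A := by
      rw [integral_congr (g := fun x => t ^ 2 * v x ^ 2 + (2 * t) * (u x * v x) + u x ^ 2)
        (fun x _ => h1 x)]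
      rw [integral_add ((hv.const_mul _).add (huv.const_mul _)) hu,
        integral_add (hv.const_mul _) (huv.const_mul _),
        intervalIntegral.integral_const_mul, intervalIntegral.integral_const_mul]
    nlinarith [h2, h3]
  have hd := discrim_le_zero key
  rw [discrim] at hd
  have hCB : C ^ 2 ≤ A * B := by nlinarith
  calc C ≤ |C| := le_abs_self C
    _ = Real.sqrt (C ^ 2) := (Real.sqrt_sq_eq_abs C).symm
    _ ≤ Real.sqrt (A * B) := Real.sqrt_le_sqrt hCB
    _ = Real.sqrt A * Real.sqrt B := Real.sqrt_mul hA0 B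

set_option maxHeartbeats 1000000 in
/-- Laplace-space energy estimate for the acoustic PML (1D constant-coefficient
reduction): with `S = 1 + d/s`, `s = a + ib`, `a > 0`, solutions of
`(s²/κ)p̃ − (1/S)((1/(ρS))p̃′)′ = (s/κ)F̂ − (1/S)f̂′` on `[−1,1]` with the PML boundary
conditions (reflection coefficients `|r| < 1`) satisfy `BT ≥ 0` and
`a·Ẽ_p² + ε‖(1/S)p̃′‖²_{1/ρ} + BT ≤ 2Ẽ_pẼ_f` where `ε = Re(conj(sS)/S) − a ≥ 0`. -/
theorem acoustic_pml_energy_estimate_1d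
    (ρ κ c Z : ℝ) (hρ : 0 < ρ) (hκ : 0 < κ)
    (hc : c = Real.sqrt (κ / ρ)) (hZ : Z = ρ * c)
    (d a b : ℝ) (hd : 0 ≤ d) (ha : 0 < a)
    (s S : ℂ) (hs : s = (a : ℂ) + (b : ℂ) * Complex.I) (hS : S = 1 + (d : ℂ) / s)
    (rm rp : ℝ) (hrm : |rm| < 1) (hrp : |rp| < 1)
    (p p' p'' F f f' : ℝ → ℂ)
    (hp1 : ∀ x ∈ Set.Icc (-1 : ℝ) 1, HasDerivWithinAt p (p' x) (Set.Icc (-1 : ℝ) 1) x)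
    (hp2 : ∀ x ∈ Set.Icc (-1 : ℝ) 1, HasDerivWithinAt p' (p'' x) (Set.Icc (-1 : ℝ) 1) x)
    (hp2c : ContinuousOn p'' (Set.Icc (-1 : ℝ) 1))
    (hFc : ContinuousOn F (Set.Icc (-1 : ℝ) 1))
    (hf1 : ∀ x ∈ Set.Icc (-1 : ℝ) 1, HasDerivWithinAt f (f' x) (Set.Icc (-1 : ℝ) 1) x)
    (hf'c : ContinuousOn f' (Set.Icc (-1 : ℝ) 1))
    (heq : ∀ x ∈ Set.Icc (-1 : ℝ) 1,
      (s ^ 2 / (κ : ℂ)) * p x - (1 / S) * ((1 / ((ρ : ℂ) * S)) * p'' x) =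
        (s / (κ : ℂ)) * F x - (1 / S) * f' x)
    (hbcm : ((1 + (rm : ℂ)) / (2 * (Z : ℂ))) * s * p (-1) -
      ((1 - (rm : ℂ)) / 2) * (1 / S) * p' (-1) = 0)
    (hbcp : ((1 + (rp : ℂ)) / (2 * (Z : ℂ))) * s * p 1 +
      ((1 - (rp : ℂ)) / 2) * (1 / S) * p' 1 = 0)
    (Ep Ef eps BT : ℝ)
    (hEp : Ep = Real.sqrt ((∫ x in (-1 : ℝ)..1, (1 / κ) * ‖s * p x‖ ^ 2) +
      ∫ x in (-1 : ℝ)..1, (1 / ρ) * ‖(1 / S) * p' x‖ ^ 2))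
    (hEf : Ef = Real.sqrt ((∫ x in (-1 : ℝ)..1, (1 / κ) * ‖s * F x‖ ^ 2) +
      ∫ x in (-1 : ℝ)..1, κ * ‖(1 / S) * f' x‖ ^ 2))
    (heps : eps = ((starRingEnd ℂ) (s * S) / S).re - a)
    (hBT : BT = (((starRingEnd ℂ) s / ((ρ : ℂ) * S ^ 2)) *
      ((starRingEnd ℂ) (p (-1)) * p' (-1) - (starRingEnd ℂ) (p 1) * p' 1)).re) :
    0 ≤ eps ∧ 0 ≤ BT ∧
      a * Ep ^ 2 + eps * (∫ x in (-1 : ℝ)..1, (1 / ρ) * ‖(1 / S) * p' x‖ ^ 2) +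
        BT ≤ 2 * Ep * Ef := by
  -- ### basic facts about s and S
  have hsre : s.re = a := by rw [hs]; simp
  have hsim : s.im = b := by rw [hs]; simp
  have hs0 : s ≠ 0 := fun h => by simp [h] at hsre; linarith
  have hw : s + (d:ℂ) = ⟨a + d, b⟩ := by rw [hs]; apply Complex.ext <;> simp
  have hw0 : s + (d:ℂ) ≠ 0 := by
    rw [hw]; intro h; rw [Complex.ext_iff] at h; simp at h; nlinarith [h.1]
  have hsS : s * S = s + d := by rw [hS]; field_simp
  have hS2 : S = (s + d) / s := by rw [← hsS]; field_simp
  have hS0 : S ≠ 0 := by intro h; rw [h, mul_zero] at hsS; exact hw0 hsS.symm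
  have hmv : Complex.normSq (s + d) = (a+d)^2 + b^2 := by rw [hw]; simp [Complex.normSq]; ring
  -- ### 0 ≤ eps
  have heps0 : 0 ≤ eps := by
    have h1 : (starRingEnd ℂ) (s * S) / S = (starRingEnd ℂ) (s + d) * s / (s + d) := by
      rw [hsS, hS2]; field_simp
    have h2 : ((starRingEnd ℂ) (s + d) * s / (s + d)).re
        = (a*((a+d)^2 - b^2) + 2*b^2*(a+d)) / ((a+d)^2 + b^2) := by
      rw [Complex.div_re, hmv, hw]
      simp [Complex.mul_re, Complex.mul_im, hsre, hsim]
      ring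
    rw [heps, h1, h2]
    have had : (0:ℝ) < (a+d)^2 + b^2 := by
      have := pow_pos (by linarith : (0:ℝ) < a + d) 2; nlinarith [sq_nonneg b]
    have h3 : (a*((a+d)^2 - b^2) + 2*b^2*(a+d)) / ((a+d)^2 + b^2) - a
        = 2*b^2*d / ((a+d)^2 + b^2) := by
      have : (a+d)^2 + b^2 ≠ 0 := ne_of_gt had
      field_simp
      ring
    rw [h3]
    apply div_nonneg
    · nlinarith [sq_nonneg b]
    · exact had.le
  -- ### 0 < Re (1/S)
  have hReS : 0 < (1/S).re := by
    have h1S : (1/S).re = (a*(a+d) + b*b) / ((a+d)^2+b^2) := by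
      rw [hS2, one_div_div, Complex.div_re, hmv, hw, hsre, hsim]
      simp
      ring
    rw [h1S]
    apply div_pos
    · nlinarith
    · have := pow_pos (by linarith : (0:ℝ) < a + d) 2; nlinarith [sq_nonneg b]
  -- ### 0 ≤ BT
  have hZ0 : 0 < Z := by rw [hZ, hc]; positivity
  have hZne : (Z:ℂ) ≠ 0 := by exact_mod_cast ne_of_gt hZ0
  have hrρ : (ρ:ℂ) ≠ 0 := by exact_mod_cast ne_of_gt hρ
  have hrκ : (κ:ℂ) ≠ 0 := by exact_mod_cast ne_of_gt hκ
  have hrm1 : (0:ℝ) < 1 - rm := by cases abs_lt.1 hrm; linarith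
  have hrm2 : (0:ℝ) < 1 + rm := by cases abs_lt.1 hrm; linarith
  have hrp1 : (0:ℝ) < 1 - rp := by cases abs_lt.1 hrp; linarith
  have hrp2 : (0:ℝ) < 1 + rp := by cases abs_lt.1 hrp; linarith
  have hrmc : ((1:ℂ) - rm) ≠ 0 := by
    intro h; rw [Complex.ext_iff] at h; simp at h; linarith
  have hrpc : ((1:ℂ) - rp) ≠ 0 := by
    intro h; rw [Complex.ext_iff] at h; simp at h; linarith
  have hBT0 : 0 ≤ BT := by
    have hbcm' := hbcm; have hbcp' := hbcp
    field_simp at hbcm' hbcp'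
    have hpm : ((1:ℂ) - rm) * Z * p' (-1) = (1 + (rm:ℂ)) * S * s * p (-1) := by
      linear_combination (-1:ℂ) * hbcm'
    have hpp : ((1:ℂ) - rp) * Z * p' 1 = -((1 + (rp:ℂ)) * S * s * p 1) := by
      linear_combination hbcp'
    have h1 : ((Complex.normSq (p (-1)) : ℝ) : ℂ) = p (-1) * (starRingEnd ℂ) (p (-1)) :=
      (Complex.mul_conj _).symm
    have h2 : ((Complex.normSq (p 1) : ℝ) : ℂ) = p 1 * (starRingEnd ℂ) (p 1) :=
      (Complex.mul_conj _).symm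
    have h3 : ((Complex.normSq s : ℝ) : ℂ) = s * (starRingEnd ℂ) s := (Complex.mul_conj s).symm
    set N : ℝ := ((1+rm)*(1-rp) * Complex.normSq (p (-1)) + (1+rp)*(1-rm) * Complex.normSq (p 1))
        * Complex.normSq s with hN
    set M : ℂ := ((1:ℂ) - rm) * ((1:ℂ) - rp) * (Z:ℂ) with hM
    have hMne : M ≠ 0 := mul_ne_zero (mul_ne_zero hrmc hrpc) hZne
    have key2 : (starRingEnd ℂ) s *
        ((starRingEnd ℂ) (p (-1)) * p' (-1) - (starRingEnd ℂ) (p 1) * p' 1) * M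
        = (N : ℂ) * S := by
      rw [hM]
      push_cast [hN, h1, h2, h3]
      linear_combination ((1 - (rp:ℂ)) * (starRingEnd ℂ) s * (starRingEnd ℂ) (p (-1))) * hpm
        - ((1 - (rm:ℂ)) * (starRingEnd ℂ) s * (starRingEnd ℂ) (p 1)) * hpp
    have hq : M * (ρ:ℂ) = ((((1:ℝ)-rm) * ((1:ℝ)-rp) * Z * ρ : ℝ) : ℂ) := by
      rw [hM]; push_cast; ring
    set q : ℝ := ((1:ℝ)-rm) * ((1:ℝ)-rp) * Z * ρ with hqdef
    have hq0 : 0 < q := by positivity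
    have hqc : ((q:ℝ):ℂ) ≠ 0 := by exact_mod_cast ne_of_gt hq0
    have hρS : (ρ:ℂ) * S^2 ≠ 0 := mul_ne_zero hrρ (pow_ne_zero 2 hS0)
    have hc1 : (1/S) * S^2 = S := by rw [sq]; field_simp
    have e : ((N/q : ℝ):ℂ) * (ρ:ℂ) * M = (N:ℂ) := by
      push_cast
      rw [div_mul_eq_mul_div, div_mul_eq_mul_div, div_eq_iff hqc, ← hq]; ring
    have T : (starRingEnd ℂ) s / ((ρ : ℂ) * S ^ 2) *
        ((starRingEnd ℂ) (p (-1)) * p' (-1) - (starRingEnd ℂ) (p 1) * p' 1)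
        = ((N / q : ℝ) : ℂ) * (1 / S) := by
      rw [div_mul_eq_mul_div, div_eq_iff hρS]
      apply mul_right_cancel₀ hMne
      rw [key2]
      rw [show ((N/q:ℝ):ℂ) * (1/S) * ((ρ:ℂ)*S^2) * M
          = (((N/q:ℝ):ℂ) * (ρ:ℂ) * M) * ((1/S) * S^2) from by ring, hc1, e]
    have hN0 : 0 ≤ N := by
      rw [hN]
      apply mul_nonneg _ (Complex.normSq_nonneg _)
      apply add_nonneg
      · exact mul_nonneg (mul_nonneg hrm2.le hrp1.le) (Complex.normSq_nonneg _)
      · exact mul_nonneg (mul_nonneg hrp2.le hrm1.le) (Complex.normSq_nonneg _)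
    rw [hBT, T, Complex.re_ofReal_mul]
    exact mul_nonneg (div_nonneg hN0 hq0.le) hReS.le
  refine ⟨heps0, hBT0, ?_⟩
  -- ### main energy estimate
  have huIcc : Set.uIcc (-1:ℝ) 1 = Set.Icc (-1:ℝ) 1 := Set.uIcc_of_le (by norm_num)
  have hpc : ContinuousOn p (Set.Icc (-1:ℝ) 1) := fun x hx => (hp1 x hx).continuousWithinAt
  have hp'c : ContinuousOn p' (Set.Icc (-1:ℝ) 1) := fun x hx => (hp2 x hx).continuousWithinAt
  -- boundary flux function and its derivative
  set K : ℂ := (starRingEnd ℂ) s / ((ρ:ℂ) * S^2) with hK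
  set g : ℝ → ℂ := fun x => K * ((starRingEnd ℂ) (p x) * p' x) with hg
  set g' : ℝ → ℂ := fun x =>
    K * ((starRingEnd ℂ) (p' x) * p' x + (starRingEnd ℂ) (p x) * p'' x) with hg'
  have hgd : ∀ x ∈ Set.Icc (-1:ℝ) 1, HasDerivWithinAt g (g' x) (Set.Icc (-1:ℝ) 1) x := by
    intro x hx
    exact (((hp1 x hx).star.mul (hp2 x hx)).const_mul K)
  have hgc : ContinuousOn g (Set.Icc (-1:ℝ) 1) :=
    continuousOn_const.mul (hpc.star.mul hp'c)
  have hg'c : ContinuousOn g' (Set.Icc (-1:ℝ) 1) :=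
    continuousOn_const.mul ((hp'c.star.mul hp'c).add (hpc.star.mul hp2c))
  have hgint : IntervalIntegrable g' volume (-1) 1 :=
    ContinuousOn.intervalIntegrable (by rwa [huIcc])
  have hFTC : (∫ x in (-1:ℝ)..1, g' x) = g 1 - g (-1) := by
    apply intervalIntegral.integral_eq_sub_of_hasDeriv_right_of_le (by norm_num) hgc
      (fun x hx => (((hgd x (Set.Ioo_subset_Icc_self hx)).hasDerivAt
        (Icc_mem_nhds hx.1 hx.2)).hasDerivWithinAt)) hgint
  -- the three integrands
  set A : ℝ → ℂ := fun x => (s/(κ:ℂ)) * (s * p x * (starRingEnd ℂ) (s * p x)) with hA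
  set B : ℝ → ℂ := fun x => K * (p' x * (starRingEnd ℂ) (p' x)) with hB
  set R : ℝ → ℂ := fun x =>
    (starRingEnd ℂ) s * (starRingEnd ℂ) (p x) * ((s/(κ:ℂ)) * F x - (1/S) * f' x) with hR
  have hptwise : ∀ x ∈ Set.Icc (-1:ℝ) 1, A x + B x - g' x = R x := by
    intro x hx
    have h := heq x hx
    rw [hA, hB, hg', hR, hK]
    simp only [map_mul]
    linear_combination ((starRingEnd ℂ) s * (starRingEnd ℂ) (p x)) * h
  have hAc : ContinuousOn A (Set.Icc (-1:ℝ) 1) :=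
    continuousOn_const.mul ((continuousOn_const.mul hpc).mul (continuousOn_const.mul hpc).star)
  have hBc : ContinuousOn B (Set.Icc (-1:ℝ) 1) :=
    continuousOn_const.mul (hp'c.mul hp'c.star)
  have hRc : ContinuousOn R (Set.Icc (-1:ℝ) 1) :=
    (continuousOn_const.mul hpc.star).mul
      ((continuousOn_const.mul hFc).sub (continuousOn_const.mul hf'c))
  have hAint : IntervalIntegrable A volume (-1) 1 :=
    ContinuousOn.intervalIntegrable (by rwa [huIcc])
  have hBint : IntervalIntegrable B volume (-1) 1 :=
    ContinuousOn.intervalIntegrable (by rwa [huIcc])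
  have hRint : IntervalIntegrable R volume (-1) 1 :=
    ContinuousOn.intervalIntegrable (by rwa [huIcc])
  have hIeq : (∫ x in (-1:ℝ)..1, R x)
      = (∫ x in (-1:ℝ)..1, A x) + (∫ x in (-1:ℝ)..1, B x) - (g 1 - g (-1)) := by
    rw [← hFTC, ← intervalIntegral.integral_add hAint hBint,
      ← intervalIntegral.integral_sub (hAint.add hBint) hgint]
    exact intervalIntegral.integral_congr (fun x hx => (hptwise x (huIcc ▸ hx)).symm)
  -- real parts of the integrals
  set X : ℝ := ∫ x in (-1:ℝ)..1, (1/κ) * ‖s * p x‖ ^ 2 with hX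
  set W : ℝ := ∫ x in (-1:ℝ)..1, (1/ρ) * ‖(1/S) * p' x‖ ^ 2 with hW
  have hreInt : ∀ (h : ℝ → ℂ), IntervalIntegrable h volume (-1) 1 →
      (∫ x in (-1:ℝ)..1, h x).re = ∫ x in (-1:ℝ)..1, (h x).re := by
    intro h hh
    have := (Complex.reCLM.intervalIntegral_comp_comm hh).symm
    simpa using this
  have hAre : ∀ x : ℝ, (A x).re = a * ((1/κ) * ‖s * p x‖ ^ 2) := by
    intro x
    simp only [hA]
    rw [Complex.mul_conj]
    rw [show s / (κ:ℂ) * ((Complex.normSq (s * p x) : ℝ):ℂ)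
        = ((Complex.normSq (s * p x) / κ : ℝ):ℂ) * s from by push_cast; ring]
    rw [Complex.re_ofReal_mul, hsre, Complex.sq_norm]
    ring
  have hSc : (starRingEnd ℂ) S ≠ 0 := by simpa using hS0
  have hBre : ∀ x : ℝ, (B x).re = (a + eps) * ((1/ρ) * ‖(1/S) * p' x‖ ^ 2) := by
    intro x
    have hBp : B x = (((1/ρ) * ‖(1/S) * p' x‖ ^ 2 : ℝ) : ℂ)
        * ((starRingEnd ℂ) (s*S)/S) := by
      simp only [hB, hK]
      rw [Complex.sq_norm]
      rw [show ((((1:ℝ)/ρ) * Complex.normSq ((1/S) * p' x) : ℝ) : ℂ)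
          = ((1:ℂ)/(ρ:ℂ)) * (((1/S) * p' x) * (starRingEnd ℂ) ((1/S) * p' x)) from by
        push_cast [Complex.mul_conj]; ring]
      simp only [map_mul, map_div₀, map_one, Complex.conj_ofReal]
      field_simp
    rw [hBp, Complex.re_ofReal_mul]
    rw [show ((starRingEnd ℂ) (s*S)/S).re = a + eps from by rw [heps]; ring]
    ring
  have hAXre : (∫ x in (-1:ℝ)..1, (A x).re) = a * X := by
    rw [intervalIntegral.integral_congr
      (g := fun x => a * ((1/κ) * ‖s * p x‖ ^ 2)) (fun x _ => hAre x)]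
    rw [intervalIntegral.integral_const_mul, ← hX]
  have hBWre : (∫ x in (-1:ℝ)..1, (B x).re) = (a + eps) * W := by
    rw [intervalIntegral.integral_congr
      (g := fun x => (a + eps) * ((1/ρ) * ‖(1/S) * p' x‖ ^ 2)) (fun x _ => hBre x)]
    rw [intervalIntegral.integral_const_mul, ← hW]
  have hBT' : BT = (g (-1)).re - (g 1).re := by
    rw [hBT]
    rw [show K * ((starRingEnd ℂ) (p (-1)) * p' (-1) - (starRingEnd ℂ) (p 1) * p' 1)
        = g (-1) - g 1 from by simp only [hg]; ring]
    rw [Complex.sub_re]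
  have hmain : a * X + (a + eps) * W + BT = (∫ x in (-1:ℝ)..1, R x).re := by
    have h := congrArg Complex.re hIeq
    rw [Complex.sub_re, Complex.add_re, Complex.sub_re,
      hreInt A hAint, hreInt B hBint, hAXre, hBWre] at h
    rw [hBT']
    linarith [h]
  -- bound the right-hand side
  set u : ℝ → ℝ := fun x => Real.sqrt (1/κ) * ‖s * p x‖ with hu
  set v1 : ℝ → ℝ := fun x => Real.sqrt (1/κ) * ‖s * F x‖ with hv1
  set v2 : ℝ → ℝ := fun x => Real.sqrt κ * ‖(1/S) * f' x‖ with hv2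
  have hsq1 : Real.sqrt (1/κ) * Real.sqrt (1/κ) = 1/κ := Real.mul_self_sqrt (by positivity)
  have hsq2 : Real.sqrt (1/κ) * Real.sqrt κ = 1 := by
    rw [← Real.sqrt_mul (by positivity) κ, one_div, inv_mul_cancel₀ (ne_of_gt hκ),
      Real.sqrt_one]
  have hRbound : ∀ x : ℝ, ‖R x‖ ≤ u x * v1 x + u x * v2 x := by
    intro x
    have h1 : ‖R x‖ = ‖s‖ * ‖p x‖
        * ‖(s/(κ:ℂ)) * F x - (1/S) * f' x‖ := by
      simp only [hR, norm_mul, Complex.norm_conj]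
    have tri : ‖(s/(κ:ℂ)) * F x - (1/S) * f' x‖
        ≤ ‖(s/(κ:ℂ)) * F x‖ + ‖(1/S) * f' x‖ := by
      exact norm_sub_le ((s/(κ:ℂ)) * F x) ((1/S) * f' x)
    have h2 : ‖(s/(κ:ℂ)) * F x‖ = (1/κ) * ‖s * F x‖ := by
      simp only [norm_mul, norm_div, Complex.norm_real, Real.norm_eq_abs, abs_of_pos hκ]
      ring
    have h3 : u x * v1 x + u x * v2 x = ‖s‖ * ‖p x‖
        * ((1/κ) * ‖s * F x‖ + ‖(1/S) * f' x‖) := by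
      have e : u x * v1 x + u x * v2 x
          = (Real.sqrt (1/κ) * Real.sqrt (1/κ)) * (‖s * p x‖ * ‖s * F x‖)
            + (Real.sqrt (1/κ) * Real.sqrt κ)
              * (‖s * p x‖ * ‖(1/S) * f' x‖) := by
        simp only [hu, hv1, hv2]; ring
      rw [e, hsq1, hsq2, norm_mul]
      ring
    rw [h1, h3]
    have hnn : 0 ≤ ‖s‖ * ‖p x‖ := by positivity
    exact mul_le_mul_of_nonneg_left (h2 ▸ tri) hnn
  -- continuity / integrability of the scalar functions
  have habs : ∀ (h : ℝ → ℂ), ContinuousOn h (Set.Icc (-1:ℝ) 1) →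
      ContinuousOn (fun x => ‖h x‖) (Set.Icc (-1:ℝ) 1) := by
    intro h hh
    exact continuous_norm.comp_continuousOn hh
  have hcu : ContinuousOn u (Set.Icc (-1:ℝ) 1) :=
    continuousOn_const.mul (habs _ (continuousOn_const.mul hpc))
  have hcv1 : ContinuousOn v1 (Set.Icc (-1:ℝ) 1) :=
    continuousOn_const.mul (habs _ (continuousOn_const.mul hFc))
  have hcv2 : ContinuousOn v2 (Set.Icc (-1:ℝ) 1) :=
    continuousOn_const.mul (habs _ (continuousOn_const.mul hf'c))
  have hiuv1 : IntervalIntegrable (fun x => u x * v1 x) volume (-1) 1 :=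
    ContinuousOn.intervalIntegrable (by rw [huIcc]; exact hcu.mul hcv1)
  have hiuv2 : IntervalIntegrable (fun x => u x * v2 x) volume (-1) 1 :=
    ContinuousOn.intervalIntegrable (by rw [huIcc]; exact hcu.mul hcv2)
  have hiu2 : IntervalIntegrable (fun x => u x ^ 2) volume (-1) 1 :=
    ContinuousOn.intervalIntegrable (by rw [huIcc]; exact hcu.pow 2)
  have hiv12 : IntervalIntegrable (fun x => v1 x ^ 2) volume (-1) 1 :=
    ContinuousOn.intervalIntegrable (by rw [huIcc]; exact hcv1.pow 2)
  have hiv22 : IntervalIntegrable (fun x => v2 x ^ 2) volume (-1) 1 :=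
    ContinuousOn.intervalIntegrable (by rw [huIcc]; exact hcv2.pow 2)
  -- identify the squares with the energy integrands
  have hX0 : 0 ≤ X := by
    rw [hX]; exact integral_nonneg (by norm_num) (fun x _ => by positivity)
  have hW0 : 0 ≤ W := by
    rw [hW]; exact integral_nonneg (by norm_num) (fun x _ => by positivity)
  set Y1 : ℝ := ∫ x in (-1:ℝ)..1, (1/κ) * ‖s * F x‖ ^ 2 with hY1
  set Y2 : ℝ := ∫ x in (-1:ℝ)..1, κ * ‖(1/S) * f' x‖ ^ 2 with hY2
  have hY10 : 0 ≤ Y1 := by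
    rw [hY1]; exact integral_nonneg (by norm_num) (fun x _ => by positivity)
  have hY20 : 0 ≤ Y2 := by
    rw [hY2]; exact integral_nonneg (by norm_num) (fun x _ => by positivity)
  have hu2 : (∫ x in (-1:ℝ)..1, u x ^ 2) = X := by
    rw [hX]
    exact intervalIntegral.integral_congr (fun x _ => by
      simp only [hu]; rw [mul_pow, Real.sq_sqrt (by positivity : (0:ℝ) ≤ 1/κ)])
  have hv12 : (∫ x in (-1:ℝ)..1, v1 x ^ 2) = Y1 := by
    rw [hY1]
    exact intervalIntegral.integral_congr (fun x _ => by
      simp only [hv1]; rw [mul_pow, Real.sq_sqrt (by positivity : (0:ℝ) ≤ 1/κ)])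
  have hv22 : (∫ x in (-1:ℝ)..1, v2 x ^ 2) = Y2 := by
    rw [hY2]
    exact intervalIntegral.integral_congr (fun x _ => by
      simp only [hv2]; rw [mul_pow, Real.sq_sqrt hκ.le])
  have hcs1 : (∫ x in (-1:ℝ)..1, u x * v1 x) ≤ Real.sqrt X * Real.sqrt Y1 := by
    have := pml_cs_helper u v1 hiu2 hiv12 hiuv1
    rwa [hu2, hv12] at this
  have hcs2 : (∫ x in (-1:ℝ)..1, u x * v2 x) ≤ Real.sqrt X * Real.sqrt Y2 := by
    have := pml_cs_helper u v2 hiu2 hiv22 hiuv2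
    rwa [hu2, hv22] at this
  -- comparison with the energies
  have hEp0 : 0 ≤ Ep := by rw [hEp]; exact Real.sqrt_nonneg _
  have hEf0 : 0 ≤ Ef := by rw [hEf]; exact Real.sqrt_nonneg _
  have hsX : Real.sqrt X ≤ Ep := by
    rw [hEp]; exact Real.sqrt_le_sqrt (by linarith)
  have hsY1 : Real.sqrt Y1 ≤ Ef := by
    rw [hEf]; exact Real.sqrt_le_sqrt (by linarith)
  have hsY2 : Real.sqrt Y2 ≤ Ef := by
    rw [hEf]; exact Real.sqrt_le_sqrt (by linarith)
  have hEp2 : Ep ^ 2 = X + W := by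
    rw [hEp, Real.sq_sqrt (by linarith)]
  -- put the chain together
  have hchain : (∫ x in (-1:ℝ)..1, R x).re ≤ 2 * Ep * Ef := by
    calc (∫ x in (-1:ℝ)..1, R x).re ≤ ‖∫ x in (-1:ℝ)..1, R x‖ := (Complex.re_le_norm _)
      _ ≤ ∫ x in (-1:ℝ)..1, ‖R x‖ :=
          intervalIntegral.norm_integral_le_integral_norm (by norm_num)
      _ ≤ ∫ x in (-1:ℝ)..1, (u x * v1 x + u x * v2 x) := by
          apply intervalIntegral.integral_mono_on (by norm_num) hRint.norm
            (hiuv1.add hiuv2) (fun x _ => hRbound x)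
      _ = (∫ x in (-1:ℝ)..1, u x * v1 x) + ∫ x in (-1:ℝ)..1, u x * v2 x :=
          intervalIntegral.integral_add hiuv1 hiuv2
      _ ≤ Real.sqrt X * Real.sqrt Y1 + Real.sqrt X * Real.sqrt Y2 := by linarith
      _ ≤ Ep * Ef + Ep * Ef := by
          gcongr <;> first | exact Real.sqrt_nonneg _ | assumption
      _ = 2 * Ep * Ef := by ring
  calc a * Ep ^ 2 + eps * W + BT = a * X + (a + eps) * W + BT := by rw [hEp2]; ring
    _ = (∫ x in (-1:ℝ)..1, R x).re := hmain
    _ ≤ 2 * Ep * Ef := hchain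
end
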